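/- arXiv:1208.0357 — 2 statements merged into one kernel-verified Lean document; each statement's English description precedes it below -/
import Mathlib

section
/- Let ℓ, m ≥ 1 be integers, at least one of which is even, and let Φ be the total Culler–Shalen seminorm function for K = J(ℓ,−m) (with α = ℓm+1 and β = m). Then for all integers p, q: 2Φ(p,q) = (ℓm − ℓ − m)|p| + ℓ|p − 2mq| + m|p + 2ℓq| if ℓ and m are both even; 2Φ(p,q) = (ℓ−1)(m−1)|p + 2mq| + (ℓ−1)|p| + m|p + 2(ℓ+m)q| if ℓ is odd; 2Φ(p,q) = (ℓ−1)(m−1)|p − 2ℓq| + ℓ|p − 2(ℓ+m)q| + (m−1)|p| if m is odd. -/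
noncomputable section

/-- The continued fraction value `cf [n_1, …, n_k] = 1/(n_1 + 1/(n_2 + ⋯ + 1/n_k))`. -/
def cf : List ℤ → ℚ
  | [] => 0
  | n :: L => 1 / ((n : ℚ) + cf L)

/-- `n⁺`: the number of (0-based) indices `j` with `sign(n_j) = (−1)^j`
(1-based: `sign(n_i) = (−1)^{i−1}`). -/
def nplus (L : List ℤ) : ℕ :=
  ((Finset.range L.length).filter (fun j => (L.getD j 0).sign = (-1) ^ j)).card

/-- `s(n) = n⁺ − n⁻` where `n⁻ = k − n⁺`. -/
def sval (L : List ℤ) : ℤ := 2 * (nplus L : ℤ) - L.length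

/-- The set `S` of all finite integer sequences with all entries of absolute value at
least `2` whose continued fraction value is `β/α` or `(β−α)/α`. -/
def Sset (α β : ℤ) : Set (List ℤ) :=
  {L | (∀ n ∈ L, 2 ≤ |n|) ∧
    (cf L = (β : ℚ) / (α : ℚ) ∨ cf L = ((β : ℚ) - (α : ℚ)) / (α : ℚ))}

/-- The weight `∏_{j=1}^{k} (|n_j| − 1)` of an expansion. -/
def weightProd (L : List ℤ) : ℤ := (L.map (fun n => |n| - 1)).prod

/-- The total Culler–Shalen seminorm
`Φ(p,q) = (1/2)(−|p| + Σ_{n∈S} |p − N_n·q|·∏_j (|n_j| − 1))`, where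
`N_n = 2(s(n) − s(n₀))` and `n₀` is the all-even expansion in `S`. -/
def totalSeminorm (α β : ℤ) (n₀ : List ℤ) (p q : ℤ) : ℚ :=
  (1 / 2) * (-(|(p : ℚ)|) +
    ∑ᶠ L ∈ Sset α β, ((|p - 2 * (sval L - sval n₀) * q| * weightProd L : ℤ) : ℚ))

def negL (L : List ℤ) : List ℤ := L.map (fun n => -n)

lemma negL_negL (L : List ℤ) : negL (negL L) = L := by
  simp [negL, List.map_map, Function.comp]

lemma mem_negL {x : ℤ} {L : List ℤ} : x ∈ negL L ↔ -x ∈ L := by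
  simp only [negL, List.mem_map]
  constructor
  · rintro ⟨a, ha, rfl⟩; simpa using ha
  · intro h; exact ⟨-x, h, by ring⟩

lemma bound_negL {L : List ℤ} (h : ∀ n ∈ L, 2 ≤ |n|) : ∀ n ∈ negL L, 2 ≤ |n| := by
  intro n hn
  rw [mem_negL] at hn
  simpa using h _ hn

lemma cf_negL (L : List ℤ) : cf (negL L) = -cf L := by
  induction L with
  | nil => simp [negL, cf]
  | cons n L ih =>
      show cf ((-n) :: negL L) = _
      rw [cf, cf, ih]
      have h : (((-n : ℤ)) : ℚ) + -cf L = -((n : ℚ) + cf L) := by push_cast; ring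
      rw [h, div_neg]

lemma abs_cf_lt_one {L : List ℤ} (h : ∀ n ∈ L, 2 ≤ |n|) : |cf L| < 1 := by
  induction L with
  | nil => simp [cf]
  | cons n L ih =>
      have hL := ih (fun x hx => h x (List.mem_cons_of_mem _ hx))
      have hn : 2 ≤ |n| := h n (List.mem_cons_self)
      have hn' : (2:ℚ) ≤ |(n:ℚ)| := by exact_mod_cast (by exact_mod_cast hn : (2:ℤ) ≤ |n|)
      have hd : 1 < |(n:ℚ) + cf L| := by
        have := abs_sub_abs_le_abs_sub (n : ℚ) (-(cf L))
        have h2 : |(n:ℚ) - -(cf L)| = |(n:ℚ) + cf L| := by ring_nf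
        rw [abs_neg] at this
        rw [h2] at this
        linarith
      rw [cf, abs_div, abs_one]
      rw [div_lt_one (by linarith)]
      exact hd

lemma cf_denom_ne {n : ℤ} {L : List ℤ} (h : ∀ x ∈ n :: L, 2 ≤ |x|) :
    (n : ℚ) + cf L ≠ 0 := by
  have hL := abs_cf_lt_one (fun x hx => h x (List.mem_cons_of_mem _ hx))
  have hn : 2 ≤ |n| := h n (List.mem_cons_self)
  have hn' : (2:ℚ) ≤ |(n:ℚ)| := by exact_mod_cast (by exact_mod_cast hn : (2:ℤ) ≤ |n|)
  intro h0
  have : (n:ℚ) = -cf L := by linarith [h0]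
  rw [this, abs_neg] at hn'
  linarith

lemma cf_ne_zero {L : List ℤ} (h : ∀ x ∈ L, 2 ≤ |x|) (hne : L ≠ []) : cf L ≠ 0 := by
  cases L with
  | nil => exact absurd rfl hne
  | cons n L => rw [cf]; exact one_div_ne_zero (cf_denom_ne h)

lemma step {L : List ℤ} {r : ℚ} (h : ∀ x ∈ L, 2 ≤ |x|) (hcf : cf L = r) (hr : r ≠ 0) :
    ∃ n L', L = n :: L' ∧ (∀ x ∈ L', 2 ≤ |x|) ∧ 2 ≤ |n| ∧
      cf L' = 1 / r - n ∧ |cf L'| < 1 := by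
  cases L with
  | nil => exact absurd (by rw [← hcf]; rfl) hr
  | cons n L' =>
      have hb' : ∀ x ∈ L', 2 ≤ |x| := fun x hx => h x (List.mem_cons_of_mem _ hx)
      have hd := cf_denom_ne h
      rw [cf] at hcf
      have h1r : 1 / r = (n:ℚ) + cf L' := by rw [← hcf, one_div_one_div]
      exact ⟨n, L', rfl, hb', h n (List.mem_cons_self), by rw [h1r]; ring,
        abs_cf_lt_one hb'⟩

def gcount (ε : ℤ) (L : List ℤ) : ℕ :=
  ((Finset.range L.length).filter (fun j => (L.getD j 0).sign = ε * (-1) ^ j)).card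

lemma nplus_eq_gcount (L : List ℤ) : nplus L = gcount 1 L := by
  unfold nplus gcount; simp

lemma gcount_cons (ε n) (L : List ℤ) :
    gcount ε (n :: L) = (if n.sign = ε then 1 else 0) + gcount (-ε) L := by
  unfold gcount
  rw [Finset.card_filter, Finset.card_filter]
  have hlen : (n :: L).length = L.length + 1 := rfl
  rw [hlen, Finset.sum_range_succ', add_comm]
  congr 1
  · simp [List.getD]
  · apply Finset.sum_congr rfl
    intro j _
    congr 1
    rw [List.getD_cons_succ]
    simp only [eq_iff_iff]
    constructor <;> intro h <;> rw [h] <;> ring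
lemma gcount_negL (ε) (L : List ℤ) : gcount ε (negL L) = gcount (-ε) L := by
  unfold gcount
  have hlen : (negL L).length = L.length := by simp [negL]
  rw [hlen]
  congr 1
  apply Finset.filter_congr
  intro j hj
  rw [Finset.mem_range] at hj
  have hg : (negL L).getD j 0 = -(L.getD j 0) := by
    rw [List.getD_eq_getElem _ _ (by simpa [negL] using hj), List.getD_eq_getElem _ _ hj]
    simp [negL]
  rw [hg, Int.sign_neg]
  constructor <;> intro h
  · have := neg_eq_iff_eq_neg.mp h; rw [this]; ring
  · rw [h]; ring

lemma gcount_add (ε) (L : List ℤ) (hε : ε = 1 ∨ ε = -1) (h0 : ∀ x ∈ L, x ≠ 0) :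
    gcount ε L + gcount (-ε) L = L.length := by
  have key := Finset.card_filter_add_card_filter_not
    (s := Finset.range L.length) (p := fun j => (L.getD j 0).sign = ε * (-1) ^ j)
  rw [Finset.card_range] at key
  rw [← key]
  unfold gcount
  congr 2
  apply Finset.filter_congr
  intro j hj
  rw [Finset.mem_range] at hj
  have hmem : L.getD j 0 ∈ L := by
    rw [List.getD_eq_getElem _ _ hj]; exact List.getElem_mem _
  have hs : (L.getD j 0).sign = 1 ∨ (L.getD j 0).sign = -1 := by
    rcases lt_trichotomy (L.getD j 0) 0 with h | h | h
    · right; exact Int.sign_eq_neg_one_of_neg h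
    · exact absurd h (h0 _ hmem)
    · left; exact Int.sign_eq_one_of_pos h
  have hneg : (-ε) * (-1)^j = -(ε * (-1)^j) := by ring
  rw [hneg]
  have hpow : (-1:ℤ)^j = 1 ∨ (-1:ℤ)^j = -1 := by
    rcases Nat.even_or_odd j with h | h
    · left; exact h.neg_one_pow
    · right; exact h.neg_one_pow
  constructor <;> intro h
  · intro hc
    rcases hs with h1 | h1 <;> rcases hε with rfl | rfl <;> rcases hpow with h2 | h2 <;>
      rw [h1] at h hc <;> rw [h2] at h hc <;> omega
  · rcases hs with h1 | h1 <;> rcases hε with rfl | rfl <;> rcases hpow with h2 | h2 <;>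
      rw [h1] at h ⊢ <;> rw [h2] at h ⊢ <;> omega

lemma sval_cons {n : ℤ} {L : List ℤ} (hn : n ≠ 0) (h0 : ∀ x ∈ L, x ≠ 0) :
    sval (n :: L) = n.sign - sval L := by
  unfold sval
  rw [nplus_eq_gcount, nplus_eq_gcount, gcount_cons]
  have hadd := gcount_add 1 L (Or.inl rfl) h0
  have hlen : ((n :: L).length : ℤ) = (L.length : ℤ) + 1 := by simp
  rw [hlen]
  rcases lt_trichotomy n 0 with h | h | h
  · rw [Int.sign_eq_neg_one_of_neg h, if_neg (by norm_num)]
    push_cast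
    omega
  · exact absurd h hn
  · rw [Int.sign_eq_one_of_pos h, if_pos rfl]
    push_cast
    omega

lemma sval_negL (L : List ℤ) (h0 : ∀ x ∈ L, x ≠ 0) : sval (negL L) = -sval L := by
  unfold sval
  rw [nplus_eq_gcount, nplus_eq_gcount, gcount_negL]
  have hadd := gcount_add 1 L (Or.inl rfl) h0
  have hlen : ((negL L).length : ℤ) = (L.length : ℤ) := by simp [negL]
  rw [hlen]
  omega

/-- alternating list `[-2, 2, -2, ...]` of length `k`. -/
def Ealt : ℕ → List ℤ
  | 0 => []
  | k + 1 => -2 :: negL (Ealt k)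

/-- `Fch m k` is the expansion of `-(km+1)/((k+1)m+1)`. -/
def Fch (m : ℕ) : ℕ → List ℤ
  | 0 => [-((m : ℤ) + 1)]
  | k + 1 => -2 :: negL (Fch m k)

lemma bound_Ealt (k : ℕ) : ∀ n ∈ Ealt k, 2 ≤ |n| := by
  induction k with
  | zero => simp [Ealt]
  | succ k ih =>
      intro n hn
      rcases List.mem_cons.mp hn with rfl | hn
      · norm_num
      · exact bound_negL ih n hn

lemma bound_Fch (m : ℕ) (hm : 1 ≤ m) (k : ℕ) : ∀ n ∈ Fch m k, 2 ≤ |n| := by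
  induction k with
  | zero =>
      intro n hn
      simp only [Fch, List.mem_singleton] at hn
      subst hn
      rw [abs_neg, abs_of_pos (by positivity)]
      exact_mod_cast Nat.succ_le_succ hm
  | succ k ih =>
      intro n hn
      rcases List.mem_cons.mp hn with rfl | hn
      · norm_num
      · exact bound_negL ih n hn

lemma cf_Ealt (k : ℕ) : cf (Ealt k) = -((k : ℚ) / (k + 1)) := by
  induction k with
  | zero => simp [Ealt, cf]
  | succ k ih =>
      rw [Ealt, cf, cf_negL, ih]
      have h1 : ((k : ℚ) + 1) ≠ 0 := by positivity
      have h2 : ((k:ℚ)+2) ≠ 0 := by positivity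
      have hd : ((-2 : ℤ) : ℚ) + - -((k : ℚ) / (k + 1)) = -(((k:ℚ)+2)/((k:ℚ)+1)) := by
        field_simp
        ring
      rw [hd, div_neg, one_div_div]
      push_cast
      rw [neg_inj, div_eq_div_iff h2 (by positivity)]
      ring

lemma cf_Fch (m : ℕ) (k : ℕ) : cf (Fch m k) =
    -(((k : ℚ) * m + 1) / (((k : ℚ) + 1) * m + 1)) := by
  induction k with
  | zero =>
      rw [Fch, cf, cf]
      push_cast
      have h1 : (m:ℚ) + 1 ≠ 0 := by positivity
      rw [show ((-((m:ℚ)+1)) + 0) = -((m:ℚ)+1) by ring, div_neg, neg_inj, one_div,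
        inv_eq_iff_eq_inv, inv_div]
      field_simp
      ring
  | succ k ih =>
      rw [Fch, cf, cf_negL, ih]
      have h1 : ((k : ℚ) + 1) * m + 1 ≠ 0 := by positivity
      have h2 : ((k : ℚ) + 1 + 1) * m + 1 ≠ 0 := by positivity
      have h3 : (k:ℚ)*m + 1 ≠ 0 := by positivity
      have hd : (-2 : ℚ) + - -(((k:ℚ) * m + 1) / (((k:ℚ) + 1) * m + 1)) =
          -((((k:ℚ)+1)*m+1)/(((k:ℚ)+1)*m+1)*((((k:ℚ)+1+1)*m+1)/(((k:ℚ)+1)*m+1))) := by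
        field_simp
        ring
      push_cast
      rw [hd]
      rw [div_self h1, one_mul, div_neg, one_div_div, neg_inj,
        div_eq_div_iff h2 (by positivity)]

lemma weightProd_cons (n : ℤ) (L : List ℤ) :
    weightProd (n :: L) = (|n| - 1) * weightProd L := by
  simp [weightProd]

lemma weightProd_negL (L : List ℤ) : weightProd (negL L) = weightProd L := by
  unfold weightProd negL
  rw [List.map_map]
  congr 1
  apply List.map_congr_left
  intro x _
  simp

lemma weightProd_Ealt (k : ℕ) : weightProd (Ealt k) = 1 := by
  induction k with
  | zero => simp [Ealt, weightProd]
  | succ k ih => rw [Ealt, weightProd_cons, weightProd_negL, ih]; norm_num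

lemma weightProd_Fch (m k : ℕ) : weightProd (Fch m k) = (m : ℤ) := by
  induction k with
  | zero =>
      rw [show Fch m 0 = [-((m:ℤ)+1)] from rfl, weightProd_cons,
        show weightProd [] = 1 from rfl, abs_neg, abs_of_pos (by positivity)]
      ring
  | succ k ih =>
      rw [Fch, weightProd_cons, weightProd_negL, ih]
      norm_num

lemma nonzero_of_bound {L : List ℤ} (h : ∀ n ∈ L, 2 ≤ |n|) : ∀ x ∈ L, x ≠ 0 := by
  intro x hx h0
  have := h x hx
  rw [h0] at this
  norm_num at this

lemma sval_Ealt (k : ℕ) : sval (Ealt k) = -(k : ℤ) := by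
  induction k with
  | zero => simp [Ealt, sval, nplus]
  | succ k ih =>
      rw [Ealt, sval_cons (by norm_num)
        (nonzero_of_bound (bound_negL (bound_Ealt k))),
        sval_negL _ (nonzero_of_bound (bound_Ealt k)), ih,
        show ((-2:ℤ)).sign = -1 from rfl]
      push_cast
      ring

lemma sval_Fch (m : ℕ) (hm : 1 ≤ m) (k : ℕ) : sval (Fch m k) = -((k : ℤ) + 1) := by
  induction k with
  | zero =>
      rw [Fch]
      rw [sval_cons (by omega) (by simp), show sval [] = 0 by simp [sval, nplus],
        Int.sign_eq_neg_one_of_neg (by omega)]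
      norm_num
  | succ k ih =>
      rw [Fch, sval_cons (by norm_num)
        (nonzero_of_bound (bound_negL (bound_Fch m hm k))),
        sval_negL _ (nonzero_of_bound (bound_Fch m hm k)), ih,
        show ((-2:ℤ)).sign = -1 from rfl]
      push_cast
      ring


lemma pin_neg2 {n : ℤ} {x : ℚ} (hx1 : -2 ≤ x) (hx2 : x < -1)
    (habs : |x - (n:ℚ)| < 1) (hn : 2 ≤ |n|) : n = -2 := by
  rw [abs_lt] at habs
  have h1 : (-3 : ℚ) < (n:ℚ) := by linarith [habs.2]
  have h2 : ((n:ℚ)) < 0 := by linarith [habs.1]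
  have h1' : (-3 : ℤ) < n := by exact_mod_cast h1
  have h2' : n < 0 := by exact_mod_cast h2
  rcases le_abs.mp hn with h | h <;> omega

lemma eq_nil_of_cf_eq_zero {L : List ℤ} (hb : ∀ x ∈ L, 2 ≤ |x|) (h : cf L = 0) :
    L = [] := by
  by_contra hne
  exact cf_ne_zero hb hne h

lemma single_complete {L : List ℤ} {a : ℤ} (ha : 2 ≤ a)
    (hb : ∀ x ∈ L, 2 ≤ |x|) (hcf : cf L = 1 / (a : ℚ)) : L = [a] := by
  have ha0 : ((a:ℚ)) ≠ 0 := by positivity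
  obtain ⟨n, L', rfl, hb', hn, hcf', habs⟩ := step hb hcf (one_div_ne_zero ha0)
  rw [one_div_one_div] at hcf'
  rw [hcf', abs_lt] at habs
  have : n = a := by
    have h1 : (a:ℚ) - 1 < n := by linarith [habs.2]
    have h2 : ((n:ℚ)) < a + 1 := by linarith [habs.1]
    have h1' : a - 1 < n := by exact_mod_cast h1
    have h2' : n < a + 1 := by exact_mod_cast h2
    omega
  subst this
  have : cf L' = 0 := by rw [hcf']; ring
  rw [eq_nil_of_cf_eq_zero hb' this]

lemma Ealt_complete : ∀ k : ℕ, ∀ {L : List ℤ}, (∀ x ∈ L, 2 ≤ |x|) →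
    cf L = -((k : ℚ) / ((k:ℚ) + 1)) → L = Ealt k := by
  intro k
  induction k with
  | zero =>
      intro L hb hcf
      norm_num at hcf
      exact eq_nil_of_cf_eq_zero hb hcf
  | succ k ih =>
      intro L hb hcf
      have hB : (0:ℚ) < (k:ℚ) + 1 := by positivity
      have hA : (0:ℚ) < (k:ℚ) + 2 := by positivity
      have hr0 : -(((k:ℕ)+1 : ℚ) / (((k:ℕ)+1:ℚ) + 1)) ≠ 0 := by
        push_cast
        intro h
        rw [neg_eq_zero, div_eq_zero_iff] at h
        rcases h with h | h <;> nlinarith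
      push_cast at hcf
      obtain ⟨n, L', rfl, hb', hn, hcf', habs⟩ := step hb hcf (by push_cast; exact hr0)
      have h1r : 1 / (-(((k:ℚ)+1) / ((k:ℚ)+1+1))) = -(((k:ℚ)+2) / ((k:ℚ)+1)) := by
        rw [one_div, inv_neg, inv_div]
        congr 1
        congr 1
        ring
      rw [h1r] at hcf'
      have hub : -(((k:ℚ)+2) / ((k:ℚ)+1)) < -1 := by
        rw [neg_lt, neg_neg, lt_div_iff₀ hB]
        linarith
      have hlb : (-2:ℚ) ≤ -(((k:ℚ)+2) / ((k:ℚ)+1)) := by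
        rw [neg_le, neg_neg, div_le_iff₀ hB]
        linarith
      have hn2 : n = -2 := by
        apply pin_neg2 hlb hub _ hn
        rw [← hcf']
        exact habs
      subst hn2
      have hcfL' : cf (negL L') = -((k:ℚ) / ((k:ℚ)+1)) := by
        rw [cf_negL, hcf']
        push_cast
        field_simp
        ring
      have := ih (bound_negL hb') hcfL'
      have hL' : L' = negL (Ealt k) := by rw [← negL_negL L', this]
      rw [hL']
      rfl

lemma Fch_complete (m : ℕ) (hm : 1 ≤ m) : ∀ k : ℕ, ∀ {L : List ℤ},
    (∀ x ∈ L, 2 ≤ |x|) →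
    cf L = -(((k:ℚ) * m + 1) / (((k:ℚ) + 1) * m + 1)) → L = Fch m k := by
  have hm' : (1:ℚ) ≤ (m:ℚ) := by exact_mod_cast hm
  intro k
  induction k with
  | zero =>
      intro L hb hcf
      push_cast at hcf
      have hcf2 : cf L = -(1 / ((m:ℚ) + 1)) := by rw [hcf]; ring
      clear hcf
      have hr0 : -(1 / ((m:ℚ) + 1)) ≠ 0 := by
        rw [neg_ne_zero]
        exact one_div_ne_zero (by positivity)
      obtain ⟨n, L', rfl, hb', hn, hcf', habs⟩ := step hb hcf2 hr0
      have h1r : 1 / (-(1 / ((m:ℚ) + 1))) = -((m:ℚ)+1) := by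
        rw [one_div, inv_neg, one_div, inv_inv]
      rw [h1r] at hcf'
      have hn2 : n = -((m:ℤ)+1) := by
        rw [hcf', abs_lt] at habs
        have h1 : -((m:ℚ)+2) < (n:ℚ) := by linarith [habs.2]
        have h2 : ((n:ℚ)) < -(m:ℚ) := by linarith [habs.1]
        have h1' : -((m:ℤ)+2) < n := by exact_mod_cast h1
        have h2' : n < -(m:ℤ) := by exact_mod_cast h2
        omega
      subst hn2
      have : cf L' = 0 := by rw [hcf']; push_cast; ring
      rw [eq_nil_of_cf_eq_zero hb' this]
      rfl
  | succ k ih =>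
      intro L hb hcf
      push_cast at hcf
      have hm0 : (0:ℚ) < (m:ℚ) := by linarith
      have hA : (0:ℚ) < ((k:ℚ)+1)*m+1 := by positivity
      have hB : (0:ℚ) < ((k:ℚ)+1+1)*m+1 := by positivity
      have hr0 : -((((k:ℚ)+1)*m+1) / (((k:ℚ)+1+1)*m+1)) ≠ 0 := by
        rw [neg_ne_zero]
        exact div_ne_zero (ne_of_gt hA) (ne_of_gt hB)
      obtain ⟨n, L', rfl, hb', hn, hcf', habs⟩ := step hb hcf hr0
      have h1r : 1 / (-((((k:ℚ)+1)*m+1) / (((k:ℚ)+1+1)*m+1)))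
          = -(((((k:ℚ)+1+1))*m+1) / (((k:ℚ)+1)*m+1)) := by
        rw [one_div, inv_neg, inv_div]
      rw [h1r] at hcf'
      have hub : -(((((k:ℚ)+1+1))*m+1) / (((k:ℚ)+1)*m+1)) < -1 := by
        rw [neg_lt, neg_neg, lt_div_iff₀ hA]
        nlinarith
      have hlb : (-2:ℚ) ≤ -(((((k:ℚ)+1+1))*m+1) / (((k:ℚ)+1)*m+1)) := by
        rw [neg_le, neg_neg, div_le_iff₀ hA]
        nlinarith
      have hn2 : n = -2 := by
        apply pin_neg2 hlb hub _ hn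
        rw [← hcf']
        exact habs
      subst hn2
      have hcfL' : cf (negL L') = -(((k:ℚ) * m + 1) / (((k:ℚ) + 1) * m + 1)) := by
        rw [cf_negL, hcf']
        push_cast
        field_simp
        ring
      have := ih (bound_negL hb') hcfL'
      have hL' : L' = negL (Fch m k) := by rw [← negL_negL L', this]
      rw [hL']
      rfl

lemma r1_complete (ℓ m : ℕ) (hl : 1 ≤ ℓ) (hm : 1 ≤ m) {L : List ℤ}
    (hb : ∀ x ∈ L, 2 ≤ |x|) (hcf : cf L = (m : ℚ) / ((ℓ:ℚ) * m + 1)) :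
    (2 ≤ ℓ ∧ 2 ≤ m ∧ L = [(ℓ:ℤ), (m:ℤ)]) ∨ L = ((ℓ:ℤ)+1) :: Ealt (m-1) := by
  have hm' : (1:ℚ) ≤ (m:ℚ) := by exact_mod_cast hm
  have hl' : (1:ℚ) ≤ (ℓ:ℚ) := by exact_mod_cast hl
  have hD : (0:ℚ) < (ℓ:ℚ)*m+1 := by positivity
  have hr0 : (m : ℚ) / ((ℓ:ℚ) * m + 1) ≠ 0 :=
    div_ne_zero (by positivity) (ne_of_gt hD)
  obtain ⟨n, L', rfl, hb', hn, hcf', habs⟩ := step hb hcf hr0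
  have h1r : 1 / ((m : ℚ) / ((ℓ:ℚ) * m + 1)) = ((ℓ:ℚ) * m + 1) / m :=
    one_div_div _ _
  rw [h1r] at hcf'
  have hub : ((ℓ:ℚ) * m + 1) / m ≤ (ℓ:ℚ) + 1 := by
    rw [div_le_iff₀ (by positivity)]
    nlinarith
  have hlb : (ℓ:ℚ) < ((ℓ:ℚ) * m + 1) / m := by
    rw [lt_div_iff₀ (by positivity)]
    nlinarith
  have habs' : |((ℓ:ℚ) * m + 1) / m - (n:ℚ)| < 1 := by
    rw [← hcf']; exact habs
  have hnn : n = (ℓ:ℤ) ∨ n = (ℓ:ℤ) + 1 := by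
    obtain ⟨ha1, ha2⟩ := abs_lt.mp habs'
    have h1 : ((ℓ:ℚ)) - 1 < (n:ℚ) := by linarith
    have h2 : ((n:ℚ)) < (ℓ:ℚ) + 2 := by linarith
    have h1' : (ℓ:ℤ) - 1 < n := by exact_mod_cast h1
    have h2' : n < (ℓ:ℤ) + 2 := by exact_mod_cast h2
    omega
  rcases hnn with rfl | rfl
  · left
    have hcfm : cf L' = 1 / (m:ℚ) := by
      rw [hcf']
      push_cast
      field_simp
      ring
    have hm2 : 2 ≤ m := by
      by_contra h
      have : m = 1 := by omega
      subst this
      rw [hcfm] at habs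
      norm_num at habs
    have hl2 : 2 ≤ ℓ := by
      have := hn
      rw [abs_of_nonneg (by positivity)] at this
      exact_mod_cast this
    refine ⟨hl2, hm2, ?_⟩
    have : L' = [(m:ℤ)] := by
      apply single_complete (by exact_mod_cast hm2) hb'
      rw [hcfm]
      norm_num
    rw [this]
  · right
    have hcfE : cf L' = -(((m-1:ℕ):ℚ) / (((m-1:ℕ):ℚ) + 1)) := by
      rw [hcf']
      have hcast : ((m-1:ℕ):ℚ) = (m:ℚ) - 1 := by
        push_cast [Nat.cast_sub hm]
        ring
      rw [hcast]
      push_cast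
      have hm0 : (m:ℚ) ≠ 0 := ne_of_gt (by linarith)
      field_simp
      ring_nf
      rw [mul_inv_cancel₀ hm0, sq, mul_assoc, mul_inv_cancel₀ hm0]
      ring
    rw [Ealt_complete (m-1) hb' hcfE]

lemma r2_complete (ℓ m : ℕ) (hl : 1 ≤ ℓ) (hm : 1 ≤ m) {L : List ℤ}
    (hb : ∀ x ∈ L, 2 ≤ |x|)
    (hcf : cf L = ((m:ℚ) - ((ℓ:ℚ) * m + 1)) / ((ℓ:ℚ) * m + 1)) :
    L = Fch m (ℓ-1) := by
  apply Fch_complete m hm (ℓ-1) hb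
  rw [hcf]
  have hcast : ((ℓ-1:ℕ):ℚ) = (ℓ:ℚ) - 1 := by
    push_cast [Nat.cast_sub hl]
    ring
  rw [hcast]
  have hD : ((ℓ:ℚ) * m + 1) ≠ 0 := by
    have : (1:ℚ) ≤ (ℓ:ℚ)*m := by
      have h1 : (1:ℚ) ≤ (ℓ:ℚ) := by exact_mod_cast hl
      have h2 : (1:ℚ) ≤ (m:ℚ) := by exact_mod_cast hm
      nlinarith
    positivity
  rw [div_eq_iff hD, show ((ℓ:ℚ)-1+1)*m+1 = (ℓ:ℚ)*m+1 by ring,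
    neg_mul, div_mul_cancel₀ _ hD]
  ring

lemma cf_L0 (ℓ m : ℕ) (hl : 1 ≤ ℓ) (hm : 1 ≤ m) :
    cf [(ℓ:ℤ), (m:ℤ)] = (m : ℚ) / ((ℓ:ℚ) * m + 1) := by
  have hm' : (0:ℚ) < (m:ℚ) := by exact_mod_cast hm
  have hD : (0:ℚ) < (ℓ:ℚ)*m+1 := by positivity
  rw [cf, cf, cf]
  push_cast
  rw [add_zero, div_eq_div_iff]
  · field_simp
  · have : (0:ℚ) < (ℓ:ℚ) + 1/(m:ℚ) := by positivity
    linarith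
  · linarith

lemma cf_L1 (ℓ m : ℕ) (hm : 1 ≤ m) :
    cf (((ℓ:ℤ)+1) :: Ealt (m-1)) = (m : ℚ) / ((ℓ:ℚ) * m + 1) := by
  have hm' : (1:ℚ) ≤ (m:ℚ) := by exact_mod_cast hm
  rw [cf, cf_Ealt]
  have hcast : ((m-1:ℕ):ℚ) = (m:ℚ) - 1 := by
    push_cast [Nat.cast_sub hm]
    ring
  rw [hcast]
  have h1 : ((m:ℚ)-1) + 1 = (m:ℚ) := by ring
  rw [h1]
  push_cast
  rw [div_eq_div_iff]
  · field_simp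
    ring
  · have : 0 ≤ ((m:ℚ)-1)/(m:ℚ) := div_nonneg (by linarith) (by linarith)
    have h2 : ((m:ℚ)-1)/(m:ℚ) < 1 := by
      rw [div_lt_one (by linarith)]
      linarith
    have hl0 : (0:ℚ) ≤ (ℓ:ℚ) := Nat.cast_nonneg ℓ
    linarith
  · have hl0 : (0:ℚ) ≤ (ℓ:ℚ) := Nat.cast_nonneg ℓ
    nlinarith

lemma cf_L2 (ℓ m : ℕ) (hl : 1 ≤ ℓ) (hm : 1 ≤ m) :
    cf (Fch m (ℓ-1)) = ((m:ℚ) - ((ℓ:ℚ) * m + 1)) / ((ℓ:ℚ) * m + 1) := by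
  rw [cf_Fch]
  have hcast : ((ℓ-1:ℕ):ℚ) = (ℓ:ℚ) - 1 := by
    push_cast [Nat.cast_sub hl]
    ring
  rw [hcast, show ((ℓ:ℚ)-1+1)*m+1 = (ℓ:ℚ)*m+1 by ring]
  rw [neg_div']
  congr 1
  ring

lemma Sset_sub (ℓ m : ℕ) (hl : 1 ≤ ℓ) (hm : 1 ≤ m) {L : List ℤ}
    (h : L ∈ Sset ((ℓ:ℤ)*m+1) (m:ℤ)) :
    (2 ≤ ℓ ∧ 2 ≤ m ∧ L = [(ℓ:ℤ), (m:ℤ)]) ∨ L = ((ℓ:ℤ)+1) :: Ealt (m-1) ∨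
      L = Fch m (ℓ-1) := by
  obtain ⟨hb, hcf | hcf⟩ := h
  · have : cf L = (m : ℚ) / ((ℓ:ℚ) * m + 1) := by
      rw [hcf]; push_cast; ring_nf
    rcases r1_complete ℓ m hl hm hb this with h | h
    · exact Or.inl h
    · exact Or.inr (Or.inl h)
  · refine Or.inr (Or.inr (r2_complete ℓ m hl hm hb ?_))
    rw [hcf]
    push_cast
    ring_nf

lemma L1_mem (ℓ m : ℕ) (hl : 1 ≤ ℓ) (hm : 1 ≤ m) :
    ((ℓ:ℤ)+1) :: Ealt (m-1) ∈ Sset ((ℓ:ℤ)*m+1) (m:ℤ) := by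
  constructor
  · intro x hx
    rcases List.mem_cons.mp hx with rfl | hx
    · rw [abs_of_pos (by positivity)]
      omega
    · exact bound_Ealt _ x hx
  · left
    rw [cf_L1 ℓ m hm]
    push_cast
    ring_nf

lemma L2_mem (ℓ m : ℕ) (hl : 1 ≤ ℓ) (hm : 1 ≤ m) :
    Fch m (ℓ-1) ∈ Sset ((ℓ:ℤ)*m+1) (m:ℤ) := by
  refine ⟨bound_Fch m hm _, Or.inr ?_⟩
  rw [cf_L2 ℓ m hl hm]
  push_cast
  ring_nf

lemma L0_mem (ℓ m : ℕ) (hl : 2 ≤ ℓ) (hm : 2 ≤ m) :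
    [(ℓ:ℤ), (m:ℤ)] ∈ Sset ((ℓ:ℤ)*m+1) (m:ℤ) := by
  constructor
  · intro x hx
    rcases List.mem_cons.mp hx with rfl | hx
    · rw [abs_of_nonneg (by positivity)]
      exact_mod_cast hl
    · rcases List.mem_cons.mp hx with rfl | hx
      · rw [abs_of_nonneg (by positivity)]
        exact_mod_cast hm
      · simp at hx
  · left
    rw [cf_L0 ℓ m (by omega) (by omega)]
    push_cast
    ring_nf


lemma Fch_head (m k : ℕ) : ∃ x t, Fch m k = x :: t ∧ x < 0 := by
  cases k with
  | zero => exact ⟨-((m:ℤ)+1), [], rfl, by omega⟩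
  | succ k => exact ⟨-2, negL (Fch m k), rfl, by omega⟩

lemma L0_ne_L1 (ℓ m : ℕ) : [(ℓ:ℤ), (m:ℤ)] ≠ ((ℓ:ℤ)+1) :: Ealt (m-1) := by
  intro h
  have := (List.cons.injEq _ _ _ _ ▸ h)
  rw [List.cons.injEq] at h
  omega

lemma L0_ne_L2 (ℓ m : ℕ) (hl : 1 ≤ ℓ) : [(ℓ:ℤ), (m:ℤ)] ≠ Fch m (ℓ-1) := by
  obtain ⟨x, t, he, hx⟩ := Fch_head m (ℓ-1)
  rw [he]
  intro h
  rw [List.cons.injEq] at h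
  omega

lemma L1_ne_L2 (ℓ m : ℕ) : ((ℓ:ℤ)+1) :: Ealt (m-1) ≠ Fch m (ℓ-1) := by
  obtain ⟨x, t, he, hx⟩ := Fch_head m (ℓ-1)
  rw [he]
  intro h
  rw [List.cons.injEq] at h
  omega

lemma Sset_eq_big (ℓ m : ℕ) (hl : 2 ≤ ℓ) (hm : 2 ≤ m) :
    Sset ((ℓ:ℤ)*m+1) (m:ℤ) =
      ↑({[(ℓ:ℤ), (m:ℤ)], ((ℓ:ℤ)+1) :: Ealt (m-1), Fch m (ℓ-1)} :
        Finset (List ℤ)) := by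
  ext L
  simp only [Finset.coe_insert, Set.mem_insert_iff, Finset.coe_singleton,
    Set.mem_singleton_iff]
  constructor
  · intro h
    rcases Sset_sub ℓ m (by omega) (by omega) h with ⟨_, _, h⟩ | h | h
    · exact Or.inl h
    · exact Or.inr (Or.inl h)
    · exact Or.inr (Or.inr h)
  · rintro (rfl | rfl | rfl)
    · exact L0_mem ℓ m hl hm
    · exact L1_mem ℓ m (by omega) (by omega)
    · exact L2_mem ℓ m (by omega) (by omega)

lemma Sset_eq_small (ℓ m : ℕ) (hl : 1 ≤ ℓ) (hm : 1 ≤ m) (h : ℓ = 1 ∨ m = 1) :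
    Sset ((ℓ:ℤ)*m+1) (m:ℤ) =
      ↑({((ℓ:ℤ)+1) :: Ealt (m-1), Fch m (ℓ-1)} : Finset (List ℤ)) := by
  ext L
  simp only [Finset.coe_insert, Set.mem_insert_iff, Finset.coe_singleton,
    Set.mem_singleton_iff]
  constructor
  · intro hL
    rcases Sset_sub ℓ m hl hm hL with ⟨h2, h3, _⟩ | hh | hh
    · omega
    · exact Or.inl hh
    · exact Or.inr hh
  · rintro (rfl | rfl)
    · exact L1_mem ℓ m hl hm
    · exact L2_mem ℓ m hl hm

lemma sval_L0 (ℓ m : ℕ) (hl : 1 ≤ ℓ) (hm : 1 ≤ m) :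
    sval [(ℓ:ℤ), (m:ℤ)] = 0 := by
  have hl0 : ((ℓ:ℤ)) ≠ 0 := by positivity
  have hm0 : ((m:ℤ)) ≠ 0 := by positivity
  rw [sval_cons hl0 (by
      intro x hx
      rcases List.mem_singleton.mp hx with rfl
      exact hm0),
    sval_cons hm0 (by simp),
    show sval [] = 0 by simp [sval, nplus],
    Int.sign_eq_one_of_pos (by exact_mod_cast hl),
    Int.sign_eq_one_of_pos (by exact_mod_cast hm)]
  ring

lemma sval_L1 (ℓ m : ℕ) (hm : 1 ≤ m) :
    sval (((ℓ:ℤ)+1) :: Ealt (m-1)) = (m:ℤ) := by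
  rw [sval_cons (by positivity) (nonzero_of_bound (bound_Ealt _)),
    sval_Ealt, Int.sign_eq_one_of_pos (by positivity)]
  have : ((m-1:ℕ):ℤ) = (m:ℤ) - 1 := by
    push_cast [Nat.cast_sub hm]
    ring
  rw [this]
  ring

lemma sval_L2 (ℓ m : ℕ) (hl : 1 ≤ ℓ) (hm : 1 ≤ m) :
    sval (Fch m (ℓ-1)) = -(ℓ:ℤ) := by
  rw [sval_Fch m hm]
  have : ((ℓ-1:ℕ):ℤ) = (ℓ:ℤ) - 1 := by
    push_cast [Nat.cast_sub hl]
    ring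
  rw [this]
  ring

lemma Ealt_even (k : ℕ) : ∀ x ∈ Ealt k, Even x := by
  induction k with
  | zero => simp [Ealt]
  | succ k ih =>
      intro x hx
      rcases List.mem_cons.mp hx with rfl | hx
      · exact ⟨-1, by ring⟩
      · rw [mem_negL] at hx
        have h2 := ih _ hx
        simpa using h2.neg

lemma Fch_odd_entry (m : ℕ) (hm : Even m) (k : ℕ) : ∃ x ∈ Fch m k, ¬ Even x := by
  induction k with
  | zero =>
      refine ⟨-((m:ℤ)+1), List.mem_singleton.mpr rfl, ?_⟩
      rw [even_neg]
      intro h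
      have h2 : Even ((m:ℤ)) := by exact_mod_cast hm
      rcases h with ⟨a, ha⟩
      rcases h2 with ⟨b, hb⟩
      omega
  | succ k ih =>
      obtain ⟨x, hx, hodd⟩ := ih
      refine ⟨-x, List.mem_cons_of_mem _ (mem_negL.mpr (by simpa using hx)), ?_⟩
      rw [even_neg]
      exact hodd

lemma weight_L0 (ℓ m : ℕ) : weightProd [(ℓ:ℤ), (m:ℤ)] = ((ℓ:ℤ)-1)*((m:ℤ)-1) := by
  rw [weightProd_cons, weightProd_cons, show weightProd [] = 1 from rfl,
    abs_of_nonneg (by positivity : (0:ℤ) ≤ (ℓ:ℤ)),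
    abs_of_nonneg (by positivity : (0:ℤ) ≤ (m:ℤ))]
  ring

lemma weight_L1 (ℓ m : ℕ) : weightProd (((ℓ:ℤ)+1) :: Ealt (m-1)) = (ℓ:ℤ) := by
  rw [weightProd_cons, weightProd_Ealt,
    abs_of_nonneg (by positivity : (0:ℤ) ≤ (ℓ:ℤ)+1)]
  ring

/-- Theorem (seminorms for `J(ℓ,−m)`, `α = ℓm+1`, `β = m`): the stated closed
formulas for `2Φ(p,q)` in the three parity cases. -/
theorem seminorm_J_ell_neg_m (ℓ m : ℕ) (hℓ : 1 ≤ ℓ) (hm : 1 ≤ m)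
    (hpar : Even ℓ ∨ Even m) (n₀ : List ℤ)
    (hn₀S : n₀ ∈ Sset ((ℓ : ℤ) * m + 1) (m : ℤ)) (hn₀even : ∀ n ∈ n₀, Even n)
    (p q : ℤ) :
    ((Even ℓ ∧ Even m) →
      2 * totalSeminorm ((ℓ : ℤ) * m + 1) (m : ℤ) n₀ p q =
        ((ℓ : ℚ) * m - ℓ - m) * |(p : ℚ)| +
          (ℓ : ℚ) * |(p : ℚ) - 2 * (m : ℚ) * (q : ℚ)| +
          (m : ℚ) * |(p : ℚ) + 2 * (ℓ : ℚ) * (q : ℚ)|) ∧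
    (Odd ℓ →
      2 * totalSeminorm ((ℓ : ℤ) * m + 1) (m : ℤ) n₀ p q =
        ((ℓ : ℚ) - 1) * ((m : ℚ) - 1) * |(p : ℚ) + 2 * (m : ℚ) * (q : ℚ)| +
          ((ℓ : ℚ) - 1) * |(p : ℚ)| +
          (m : ℚ) * |(p : ℚ) + 2 * ((ℓ : ℚ) + (m : ℚ)) * (q : ℚ)|) ∧
    (Odd m →
      2 * totalSeminorm ((ℓ : ℤ) * m + 1) (m : ℤ) n₀ p q =
        ((ℓ : ℚ) - 1) * ((m : ℚ) - 1) * |(p : ℚ) - 2 * (ℓ : ℚ) * (q : ℚ)| +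
          (ℓ : ℚ) * |(p : ℚ) - 2 * ((ℓ : ℚ) + (m : ℚ)) * (q : ℚ)| +
          ((m : ℚ) - 1) * |(p : ℚ)|) := by
  refine ⟨?_, ?_, ?_⟩
  · rintro ⟨hel, hem⟩
    have hl2 : 2 ≤ ℓ := by obtain ⟨a, ha⟩ := hel; omega
    have hm2 : 2 ≤ m := by obtain ⟨a, ha⟩ := hem; omega
    have hn₀ : n₀ = [(ℓ:ℤ), (m:ℤ)] := by
      rcases Sset_sub ℓ m hℓ hm hn₀S with ⟨_, _, h⟩ | h | h
      · exact h
      · exfalso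
        have := hn₀even ((ℓ:ℤ)+1) (by rw [h]; exact List.mem_cons_self)
        obtain ⟨a, ha⟩ := this
        obtain ⟨b, hb⟩ := hel
        have : ((ℓ:ℤ)) = (b:ℤ) + b := by exact_mod_cast hb
        omega
      · exfalso
        obtain ⟨x, hx, hodd⟩ := Fch_odd_entry m hem (ℓ-1)
        exact hodd (hn₀even x (by rw [h]; exact hx))
    simp only [totalSeminorm]
    rw [Sset_eq_big ℓ m hl2 hm2, finsum_mem_coe_finset,
      Finset.sum_insert (by
        simp only [Finset.mem_insert, Finset.mem_singleton]
        push_neg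
        exact ⟨L0_ne_L1 ℓ m, L0_ne_L2 ℓ m hℓ⟩),
      Finset.sum_insert (by
        simp only [Finset.mem_singleton]
        exact L1_ne_L2 ℓ m),
      Finset.sum_singleton, hn₀, sval_L0 ℓ m hℓ hm, sval_L1 ℓ m hm,
      sval_L2 ℓ m hℓ hm, weight_L0, weight_L1, weightProd_Fch]
    push_cast
    rw [show (p:ℚ) - 0*q = (p:ℚ) by ring,
      show (p:ℚ) - 2*((m:ℚ)-0)*q = (p:ℚ) - 2*m*q by ring,
      show (p:ℚ) - 2*(-(ℓ:ℚ)-0)*q = (p:ℚ) + 2*ℓ*q by ring]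
    ring
  · intro hol
    have hem : Even m := by
      rcases hpar with h | h
      · exact absurd h (Nat.not_even_iff_odd.mpr hol)
      · exact h
    have hm2 : 2 ≤ m := by
      obtain ⟨a, ha⟩ := hem
      obtain ⟨b, hb⟩ := hol
      omega
    have hn₀ : n₀ = ((ℓ:ℤ)+1) :: Ealt (m-1) := by
      rcases Sset_sub ℓ m hℓ hm hn₀S with ⟨_, _, h⟩ | h | h
      · exfalso
        have := hn₀even (ℓ:ℤ) (by rw [h]; exact List.mem_cons_self)
        obtain ⟨a, ha⟩ := this
        obtain ⟨b, hb⟩ := hol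
        have : ((ℓ:ℤ)) = 2*(b:ℤ) + 1 := by exact_mod_cast hb
        omega
      · exact h
      · exfalso
        obtain ⟨x, hx, hodd⟩ := Fch_odd_entry m hem (ℓ-1)
        exact hodd (hn₀even x (by rw [h]; exact hx))
    by_cases hl2 : 2 ≤ ℓ
    · simp only [totalSeminorm]
      rw [Sset_eq_big ℓ m hl2 hm2, finsum_mem_coe_finset,
        Finset.sum_insert (by
          simp only [Finset.mem_insert, Finset.mem_singleton]
          push_neg
          exact ⟨L0_ne_L1 ℓ m, L0_ne_L2 ℓ m hℓ⟩),
        Finset.sum_insert (by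
          simp only [Finset.mem_singleton]
          exact L1_ne_L2 ℓ m),
        Finset.sum_singleton, hn₀, sval_L0 ℓ m hℓ hm, sval_L1 ℓ m hm,
        sval_L2 ℓ m hℓ hm, weight_L0, weight_L1, weightProd_Fch]
      push_cast
      rw [show (p:ℚ) - 2*((0:ℚ)-(m:ℚ))*q = (p:ℚ) + 2*m*q by ring,
        show (p:ℚ) - 2*((m:ℚ)-(m:ℚ))*q = (p:ℚ) by ring,
        show (p:ℚ) - 2*(-(ℓ:ℚ)-(m:ℚ))*q = (p:ℚ) + 2*((ℓ:ℚ)+(m:ℚ))*q by ring]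
      ring
    · have hl1 : ℓ = 1 := by omega
      subst hl1
      simp only [totalSeminorm]
      rw [Sset_eq_small 1 m le_rfl hm (Or.inl rfl), finsum_mem_coe_finset,
        Finset.sum_insert (by
          simp only [Finset.mem_singleton]
          exact L1_ne_L2 1 m),
        Finset.sum_singleton, hn₀, sval_L1 1 m hm,
        sval_L2 1 m le_rfl hm, weight_L1, weightProd_Fch]
      push_cast
      rw [show (p:ℚ) - 2*((m:ℚ)-(m:ℚ))*q = (p:ℚ) by ring,
        show (p:ℚ) - 2*(-(1:ℚ)-(m:ℚ))*q = (p:ℚ) + 2*((1:ℚ)+(m:ℚ))*q by ring]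
      ring
  · intro hom
    have hel : Even ℓ := by
      rcases hpar with h | h
      · exact h
      · exact absurd h (Nat.not_even_iff_odd.mpr hom)
    have hl2' : 2 ≤ ℓ := by
      obtain ⟨a, ha⟩ := hel
      obtain ⟨b, hb⟩ := hom
      omega
    have hn₀ : n₀ = Fch m (ℓ-1) := by
      rcases Sset_sub ℓ m hℓ hm hn₀S with ⟨_, _, h⟩ | h | h
      · exfalso
        have := hn₀even (m:ℤ) (by rw [h]; exact List.mem_cons_of_mem _ (List.mem_singleton.mpr rfl))
        obtain ⟨a, ha⟩ := this
        obtain ⟨b, hb⟩ := hom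
        have : ((m:ℤ)) = 2*(b:ℤ) + 1 := by exact_mod_cast hb
        omega
      · exfalso
        have := hn₀even ((ℓ:ℤ)+1) (by rw [h]; exact List.mem_cons_self)
        obtain ⟨a, ha⟩ := this
        obtain ⟨b, hb⟩ := hel
        have : ((ℓ:ℤ)) = (b:ℤ) + b := by exact_mod_cast hb
        omega
      · exact h
    by_cases hm2 : 2 ≤ m
    · simp only [totalSeminorm]
      rw [Sset_eq_big ℓ m hl2' hm2, finsum_mem_coe_finset,
        Finset.sum_insert (by
          simp only [Finset.mem_insert, Finset.mem_singleton]
          push_neg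
          exact ⟨L0_ne_L1 ℓ m, L0_ne_L2 ℓ m hℓ⟩),
        Finset.sum_insert (by
          simp only [Finset.mem_singleton]
          exact L1_ne_L2 ℓ m),
        Finset.sum_singleton, hn₀, sval_L0 ℓ m hℓ hm, sval_L1 ℓ m hm,
        sval_L2 ℓ m hℓ hm, weight_L0, weight_L1, weightProd_Fch]
      push_cast
      rw [show (p:ℚ) - 2*((0:ℚ)-(-(ℓ:ℚ)))*q = (p:ℚ) - 2*ℓ*q by ring,
        show (p:ℚ) - 2*((m:ℚ)-(-(ℓ:ℚ)))*q = (p:ℚ) - 2*((ℓ:ℚ)+(m:ℚ))*q by ring,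
        show (p:ℚ) - 2*(-(ℓ:ℚ)-(-(ℓ:ℚ)))*q = (p:ℚ) by ring]
      ring
    · have hm1 : m = 1 := by omega
      subst hm1
      simp only [totalSeminorm]
      rw [Sset_eq_small ℓ 1 hℓ le_rfl (Or.inr rfl), finsum_mem_coe_finset,
        Finset.sum_insert (by
          simp only [Finset.mem_singleton]
          exact L1_ne_L2 ℓ 1),
        Finset.sum_singleton, hn₀, sval_L1 ℓ 1 le_rfl,
        sval_L2 ℓ 1 hℓ le_rfl, weight_L1, weightProd_Fch]
      push_cast
      rw [show (p:ℚ) - 2*((1:ℚ)-(-(ℓ:ℚ)))*q = (p:ℚ) - 2*((ℓ:ℚ)+(1:ℚ))*q by ring,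
        show (p:ℚ) - 2*(-(ℓ:ℚ)-(-(ℓ:ℚ)))*q = (p:ℚ) by ring]
      ring
end
end

section
/- Let ℓ ≥ m ≥ 2 be integers, at least one of which is even, and let Φ be the total Culler–Shalen seminorm function for K = J(ℓ,m) (with α = ℓm−1 and β = m). Then Φ(0,1) = 2ℓm − 2 if ℓ and m are both even, Φ(0,1) = m²(ℓ−1) − (m−1)(m−2) if ℓ is odd, and Φ(0,1) = m(ℓ−1)² − (ℓ−m) + 2(m−1) if m is odd. (This value is the M-degree of the Â-polynomial of J(ℓ,m).) -/
noncomputable section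

namespace CS

def negL (L : List ℤ) : List ℤ := L.map (fun n => -n)

def alt : ℕ → List ℤ
  | 0 => []
  | k+1 => 2 :: negL (alt k)

def X1 (m : ℕ) : ℕ → List ℤ
  | 0 => [2, (m:ℤ) - 1]
  | t+1 => 2 :: negL (X1 m t)

def X2 (m : ℕ) : ℕ → List ℤ
  | 0 => 3 :: negL (alt (m - 2))
  | t+1 => 2 :: negL (X2 m t)

def goodL (L : List ℤ) : Prop := ∀ n ∈ L, 2 ≤ |n|

@[simp] lemma cf_nil : cf [] = 0 := rfl
@[simp] lemma cf_cons (n : ℤ) (T : List ℤ) : cf (n :: T) = 1 / ((n:ℚ) + cf T) := rfl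

@[simp] lemma negL_cons (n : ℤ) (T : List ℤ) : negL (n :: T) = (-n) :: negL T := rfl
@[simp] lemma negL_nil : negL [] = [] := rfl

@[simp] lemma negL_negL (L : List ℤ) : negL (negL L) = L := by
  simp [negL, List.map_map, Function.comp]

lemma of_mem_negL {x : ℤ} {L : List ℤ} (h : x ∈ negL L) : -x ∈ L := by
  rcases List.mem_map.1 h with ⟨a, ha, rfl⟩; simpa using ha

lemma neg_mem_negL {x : ℤ} {L : List ℤ} (h : x ∈ L) : -x ∈ negL L :=
  List.mem_map_of_mem h

lemma goodL_negL {L : List ℤ} (h : goodL L) : goodL (negL L) := by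
  intro n hn
  have h2 := h _ (of_mem_negL hn)
  simpa using h2

lemma goodL_tail {n : ℤ} {T : List ℤ} (h : goodL (n :: T)) : goodL T :=
  fun x hx => h x (List.mem_cons_of_mem _ hx)

lemma goodL_head {n : ℤ} {T : List ℤ} (h : goodL (n :: T)) : 2 ≤ |n| :=
  h n List.mem_cons_self

lemma cf_negL (L : List ℤ) : cf (negL L) = - cf L := by
  induction L with
  | nil => simp
  | cons n T ih =>
    rw [negL_cons, cf_cons, cf_cons,
      show ((-n : ℤ) : ℚ) + cf (negL T) = -((n:ℚ) + cf T) by push_cast [ih]; ring,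
      div_neg]

lemma cf_small : ∀ L, goodL L → |cf L| < 1 ∧ (L ≠ [] → cf L ≠ 0) := by
  intro L
  induction L with
  | nil => intro _; simp
  | cons n T ih =>
    intro hg
    have hT : |cf T| < 1 := (ih (goodL_tail hg)).1
    have hn : (2:ℚ) ≤ |(n:ℚ)| := by exact_mod_cast goodL_head hg
    have key : |(n:ℚ)| ≤ |(n:ℚ) + cf T| + |cf T| := by
      calc |(n:ℚ)| = |((n:ℚ) + cf T) + (-(cf T))| := by ring_nf
        _ ≤ |(n:ℚ) + cf T| + |(-(cf T))| := abs_add_le _ _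
        _ = |(n:ℚ) + cf T| + |cf T| := by rw [abs_neg]
    have hx : 1 < |(n:ℚ) + cf T| := by linarith
    have hx0 : (n:ℚ) + cf T ≠ 0 := by
      intro h0; rw [h0] at hx; norm_num at hx
    constructor
    · rw [cf_cons, abs_div, abs_one, div_lt_one (by linarith)]
      exact hx
    · intro _
      rw [cf_cons]
      exact one_div_ne_zero hx0

lemma cf_denom {n : ℤ} {T : List ℤ} (hg : goodL (n :: T)) :
    1 < |(n:ℚ) + cf T| ∧ (n:ℚ) + cf T ≠ 0 := by
  have hT : |cf T| < 1 := (cf_small T (goodL_tail hg)).1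
  have hn : (2:ℚ) ≤ |(n:ℚ)| := by exact_mod_cast goodL_head hg
  have key : |(n:ℚ)| ≤ |(n:ℚ) + cf T| + |cf T| := by
    calc |(n:ℚ)| = |((n:ℚ) + cf T) + (-(cf T))| := by ring_nf
      _ ≤ |(n:ℚ) + cf T| + |(-(cf T))| := abs_add_le _ _
      _ = |(n:ℚ) + cf T| + |cf T| := by rw [abs_neg]
  have hx : 1 < |(n:ℚ) + cf T| := by linarith
  exact ⟨hx, by intro h0; rw [h0] at hx; norm_num at hx⟩

lemma cf_step {n : ℤ} {T : List ℤ} (hg : goodL (n :: T)) {r : ℚ} (h : cf (n :: T) = r) :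
    r ≠ 0 ∧ cf T = 1 / r - n := by
  obtain ⟨-, hx0⟩ := cf_denom hg
  rw [cf_cons] at h
  have hr : r ≠ 0 := h ▸ one_div_ne_zero hx0
  refine ⟨hr, ?_⟩
  rw [← h, one_div_one_div]
  ring

lemma exp_inv {k : ℤ} (hk : 2 ≤ |k|) : ∀ {L}, goodL L → cf L = 1 / (k:ℚ) → L = [k] := by
  intro L hg h
  have hk0 : (k:ℚ) ≠ 0 := by
    intro h0
    have hk1 : k = 0 := by exact_mod_cast h0
    rcases abs_cases k with ⟨h1,-⟩|⟨h1,-⟩ <;> omega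
  have hr0 : 1/(k:ℚ) ≠ 0 := one_div_ne_zero hk0
  match L with
  | [] => exact absurd h.symm (by simpa using hr0)
  | n :: T =>
    obtain ⟨-, hT⟩ := cf_step hg h
    rw [one_div_one_div] at hT
    have h1 : |cf T| < 1 := (cf_small T (goodL_tail hg)).1
    have h2 : ((k - n : ℤ):ℚ) = cf T := by push_cast; linarith [hT]
    have h3 : |((k - n : ℤ):ℚ)| < 1 := by rw [h2]; exact h1
    have h4 : |k - n| < 1 := by exact_mod_cast h3
    have h5 := abs_lt.1 h4
    have hkn : n = k := by omega
    have hT0 : cf T = 0 := by rw [hT, hkn]; ring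
    have hTnil : T = [] := by
      by_contra hne
      exact (cf_small T (goodL_tail hg)).2 hne hT0
    rw [hkn, hTnil]


lemma good_alt : ∀ k, goodL (alt k) := by
  intro k
  induction k with
  | zero => intro n hn; simp [alt] at hn
  | succ k ih =>
    intro n hn
    rw [show alt (k+1) = 2 :: negL (alt k) from rfl] at hn
    rcases List.mem_cons.1 hn with rfl | hn
    · norm_num
    · exact goodL_negL ih n hn

lemma cf_alt : ∀ k : ℕ, cf (alt k) = (k:ℚ) / ((k:ℚ) + 1) := by
  intro k
  induction k with
  | zero => simp [alt]
  | succ k ih =>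
    have hk : (k:ℚ) + 1 ≠ 0 := by positivity
    rw [show alt (k+1) = 2 :: negL (alt k) from rfl, cf_cons, cf_negL, ih]
    push_cast
    rw [show (2:ℚ) + -((k:ℚ)/((k:ℚ)+1)) = ((k:ℚ)+2)/((k:ℚ)+1) by field_simp; ring,
      one_div_div]
    ring_nf

lemma exp_ratio : ∀ k : ℕ, ∀ L, goodL L → cf L = (k:ℚ) / ((k:ℚ) + 1) → L = alt k := by
  intro k
  induction k with
  | zero =>
    intro L hg h
    norm_num at h
    match L with
    | [] => rfl
    | n :: T => exact absurd h ((cf_small _ hg).2 (by simp))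
  | succ k ih =>
    intro L hg h
    have hk1 : (0:ℚ) < (k:ℚ) + 1 := by positivity
    have hk2 : (0:ℚ) < (k:ℚ) + 2 := by positivity
    have hr0 : ((k:ℚ)+1) / ((k:ℚ)+2) ≠ 0 := by positivity
    have h' : cf L = ((k:ℚ)+1) / ((k:ℚ)+2) := by rw [h]; push_cast; ring_nf
    match L with
    | [] =>
      exfalso
      rw [cf_nil] at h'
      exact hr0 h'.symm
    | n :: T =>
      obtain ⟨-, hT⟩ := cf_step hg h'
      rw [one_div_div] at hT
      set c : ℚ := ((k:ℚ)+2)/((k:ℚ)+1) with hc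
      have hc1 : 1 < c := by rw [hc, lt_div_iff₀ hk1]; linarith
      have hc2 : c ≤ 2 := by
        rw [hc, div_le_iff₀ hk1]
        have : (0:ℚ) ≤ (k:ℚ) := Nat.cast_nonneg k
        linarith
      have hb : |cf T| < 1 := (cf_small T (goodL_tail hg)).1
      rw [hT] at hb
      obtain ⟨hb1, hb2⟩ := abs_lt.1 hb
      have hn1 : (0:ℚ) < (n:ℚ) := by linarith
      have hn2 : (n:ℚ) < 3 := by linarith
      have hn1' : 0 < n := by exact_mod_cast hn1
      have hn2' : n < 3 := by exact_mod_cast hn2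
      have hgn := goodL_head hg
      have hn : n = 2 := by rcases abs_cases n with ⟨h1,-⟩|⟨h1,-⟩ <;> omega
      subst hn
      have hT2 : cf T = -((k:ℚ)/((k:ℚ)+1)) := by
        rw [hT, hc]; push_cast; field_simp; ring
      have hTneg : cf (negL T) = (k:ℚ)/((k:ℚ)+1) := by rw [cf_negL, hT2, neg_neg]
      have := ih (negL T) (goodL_negL (goodL_tail hg)) hTneg
      have hTval : T = negL (alt k) := by rw [← negL_negL T, this]
      rw [hTval]
      rfl

lemma exp_pos (ℓ m : ℕ) (hm : 2 ≤ m) (hl : 2 ≤ ℓ) (L : List ℤ) (hg : goodL L)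
    (h : cf L = (m:ℚ) / ((ℓ:ℚ) * (m:ℚ) - 1)) :
    L = [(ℓ:ℤ), -(m:ℤ)] ∨ (3 ≤ ℓ ∧ L = ((ℓ:ℤ) - 1) :: alt (m - 1)) := by
  have hmQ : (2:ℚ) ≤ (m:ℚ) := by exact_mod_cast hm
  have hlQ : (2:ℚ) ≤ (ℓ:ℚ) := by exact_mod_cast hl
  have hα : (0:ℚ) < (ℓ:ℚ) * (m:ℚ) - 1 := by nlinarith
  have hm0 : (0:ℚ) < (m:ℚ) := by linarith
  have hr0 : (m:ℚ) / ((ℓ:ℚ) * (m:ℚ) - 1) ≠ 0 := by positivity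
  match L with
  | [] => exact absurd h.symm (by simpa using hr0)
  | n :: T =>
    obtain ⟨-, hT⟩ := cf_step hg h
    rw [one_div_div] at hT
    have hb : |cf T| < 1 := (cf_small T (goodL_tail hg)).1
    have hz0 : cf T * m = ((ℓ:ℚ) * m - 1) - n * m := by
      rw [hT]; field_simp
    have hz : ((((ℓ:ℤ)*(m:ℤ) - 1 - n * m : ℤ)):ℚ) = cf T * m := by
      rw [hz0]; push_cast; ring
    have hzb : |(((ℓ:ℤ)*(m:ℤ) - 1 - n * m : ℤ):ℚ)| < (m:ℚ) := by
      rw [hz, abs_mul, abs_of_pos hm0]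
      nlinarith
    have hzb' : |(ℓ:ℤ)*(m:ℤ) - 1 - n * m| < (m:ℤ) := by exact_mod_cast hzb
    obtain ⟨hz1, hz2⟩ := abs_lt.1 hzb'
    set d : ℤ := (ℓ:ℤ) - n with hd
    have hmZ : (2:ℤ) ≤ (m:ℤ) := by exact_mod_cast hm
    have hdm1 : -(m:ℤ) < d * m - 1 := by rw [hd]; nlinarith [hz1]
    have hdm2 : d * m - 1 < (m:ℤ) := by rw [hd]; nlinarith [hz2]
    have hd0 : 0 ≤ d := by nlinarith
    have hd1 : d ≤ 1 := by nlinarith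
    rcases (by omega : d = 0 ∨ d = 1) with h0 | h1
    · -- n = ℓ
      have hn : n = (ℓ:ℤ) := by omega
      have hTv : cf T = 1 / (((-(m:ℤ)):ℤ):ℚ) := by
        rw [hT, hn]; push_cast; field_simp; ring
      have hmabs : (2:ℤ) ≤ |(-(m:ℤ))| := by
        rw [abs_neg, abs_of_nonneg (by positivity : (0:ℤ) ≤ (m:ℤ))]; exact hmZ
      have := exp_inv hmabs (goodL_tail hg) hTv
      left; rw [hn, this]
    · -- n = ℓ - 1
      have hn : n = (ℓ:ℤ) - 1 := by omega
      have hl3 : 3 ≤ ℓ := by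
        have h2 := goodL_head hg
        rcases abs_cases n with ⟨e,-⟩|⟨e,-⟩ <;> omega
      have hcast : ((m - 1 : ℕ) : ℚ) = (m:ℚ) - 1 := by
        rw [Nat.cast_sub (by omega : 1 ≤ m)]; norm_num
      have hTv : cf T = ((m-1:ℕ):ℚ) / (((m-1:ℕ):ℚ) + 1) := by
        rw [hT, hn, hcast]
        have hm0' : (m:ℚ) ≠ 0 := ne_of_gt hm0
        rw [sub_add_cancel]
        field_simp
        push_cast
        ring
      have := exp_ratio (m-1) T (goodL_tail hg) hTv
      right
      exact ⟨hl3, by rw [hn, this]⟩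

lemma exp_X (m : ℕ) (hm : 2 ≤ m) : ∀ t : ℕ, ∀ L, goodL L →
    cf L = (((t:ℚ)+1)*(m:ℚ) - 1)/(((t:ℚ)+2)*(m:ℚ) - 1) →
    L = X2 m t ∨ (3 ≤ m ∧ L = X1 m t) := by
  have hmQ : (2:ℚ) ≤ (m:ℚ) := by exact_mod_cast hm
  have hmZ : (2:ℤ) ≤ (m:ℤ) := by exact_mod_cast hm
  intro t
  induction t with
  | zero =>
    intro L hg h
    have hden : (0:ℚ) < (m:ℚ) - 1 := by linarith
    have hnum : (0:ℚ) < 2*(m:ℚ) - 1 := by linarith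
    have h' : cf L = ((m:ℚ) - 1) / (2*(m:ℚ) - 1) := by rw [h]; ring_nf
    have hr0 : ((m:ℚ) - 1) / (2*(m:ℚ) - 1) ≠ 0 := by positivity
    match L with
    | [] => exact absurd h'.symm (by simpa using hr0)
    | n :: T =>
      obtain ⟨-, hT⟩ := cf_step hg h'
      rw [one_div_div] at hT
      set c : ℚ := (2*(m:ℚ)-1)/((m:ℚ)-1) with hc
      have hc1 : 2 < c := by rw [hc, lt_div_iff₀ hden]; linarith
      have hc2 : c ≤ 3 := by rw [hc, div_le_iff₀ hden]; linarith
      have hb : |cf T| < 1 := (cf_small T (goodL_tail hg)).1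
      rw [hT] at hb
      obtain ⟨hb1, hb2⟩ := abs_lt.1 hb
      have hn1' : 1 < n := by exact_mod_cast (by linarith : (1:ℚ) < (n:ℚ))
      have hn2' : n < 4 := by exact_mod_cast (by linarith : (n:ℚ) < 4)
      rcases (by omega : n = 2 ∨ n = 3) with hn | hn
      · -- X1 case, needs m ≥ 3
        subst hn
        have hT2 : cf T = 1/((m:ℚ)-1) := by
          rw [hT, hc]; field_simp; ring
        have hm3 : 3 ≤ m := by
          by_contra hm3
          have hm2 : m = 2 := by omega
          rw [hc, hm2] at hb
          norm_num at hb
        have hT3 : cf T = 1/((((m:ℤ)-1):ℤ):ℚ) := by rw [hT2]; push_cast; ring_nf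
        have habs : (2:ℤ) ≤ |(m:ℤ)-1| := by
          rw [abs_of_nonneg (by omega)]; omega
        have := exp_inv habs (goodL_tail hg) hT3
        right
        refine ⟨hm3, ?_⟩
        rw [this]
        rfl
      · -- X2 case
        subst hn
        have hcast : ((m - 2 : ℕ) : ℚ) = (m:ℚ) - 2 := by
          rw [Nat.cast_sub hm]; norm_num
        have hne : (m:ℚ) - 1 ≠ 0 := ne_of_gt hden
        have hT2 : cf T = -(((m-2:ℕ):ℚ) / (((m-2:ℕ):ℚ) + 1)) := by
          rw [hT, hc, hcast,
            show ((m:ℚ) - 2) + 1 = (m:ℚ) - 1 by ring]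
          field_simp
          ring
        have hTneg : cf (negL T) = ((m-2:ℕ):ℚ) / (((m-2:ℕ):ℚ) + 1) := by
          rw [cf_negL, hT2, neg_neg]
        have := exp_ratio (m-2) (negL T) (goodL_negL (goodL_tail hg)) hTneg
        have hTval : T = negL (alt (m-2)) := by rw [← negL_negL T, this]
        left
        rw [hTval]
        rfl
  | succ t ih =>
    intro L hg h
    have ht0 : (0:ℚ) ≤ (t:ℚ) := Nat.cast_nonneg t
    have hden : (0:ℚ) < ((t:ℚ)+2)*(m:ℚ) - 1 := by nlinarith
    have hden3 : (0:ℚ) < ((t:ℚ)+3)*(m:ℚ) - 1 := by nlinarith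
    have hnum : (0:ℚ) < ((t:ℚ)+2)*(m:ℚ) - 1 := hden
    have h' : cf L = (((t:ℚ)+2)*(m:ℚ) - 1) / (((t:ℚ)+3)*(m:ℚ) - 1) := by
      rw [h]; push_cast; ring_nf
    have hr0 : (((t:ℚ)+2)*(m:ℚ) - 1) / (((t:ℚ)+3)*(m:ℚ) - 1) ≠ 0 := by positivity
    match L with
    | [] => exact absurd h'.symm (by simpa using hr0)
    | n :: T =>
      obtain ⟨-, hT⟩ := cf_step hg h'
      rw [one_div_div] at hT
      set c : ℚ := (((t:ℚ)+3)*(m:ℚ)-1)/(((t:ℚ)+2)*(m:ℚ)-1) with hc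
      have hc1 : 1 < c := by rw [hc, lt_div_iff₀ hden]; nlinarith
      have hc2 : c < 2 := by rw [hc, div_lt_iff₀ hden]; nlinarith
      have hb : |cf T| < 1 := (cf_small T (goodL_tail hg)).1
      rw [hT] at hb
      obtain ⟨hb1, hb2⟩ := abs_lt.1 hb
      have hn1' : 0 < n := by exact_mod_cast (by linarith : (0:ℚ) < (n:ℚ))
      have hn2' : n < 3 := by exact_mod_cast (by linarith : (n:ℚ) < 3)
      have hgn := goodL_head hg
      have hn : n = 2 := by rcases abs_cases n with ⟨h1,-⟩|⟨h1,-⟩ <;> omega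
      subst hn
      have hT2 : cf T = -((((t:ℚ)+1)*(m:ℚ) - 1)/(((t:ℚ)+2)*(m:ℚ) - 1)) := by
        have hden' := ne_of_gt hden
        rw [hT, hc]; push_cast; rw [eq_neg_iff_add_eq_zero, sub_add_eq_add_sub, ← add_div, div_sub' hden', div_eq_zero_iff]; left; ring
      have hTneg : cf (negL T) = (((t:ℚ)+1)*(m:ℚ) - 1)/(((t:ℚ)+2)*(m:ℚ) - 1) := by
        rw [cf_negL, hT2, neg_neg]
      rcases ih (negL T) (goodL_negL (goodL_tail hg)) hTneg with hX | ⟨hm3, hX⟩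
      · left
        have hTval : T = negL (X2 m t) := by rw [← negL_negL T, hX]
        rw [hTval]; rfl
      · right
        refine ⟨hm3, ?_⟩
        have hTval : T = negL (X1 m t) := by rw [← negL_negL T, hX]
        rw [hTval]; rfl

-- ### sval machinery

lemma sign_flip_iff {x : ℤ} (hx : x ≠ 0) (j : ℕ) :
    (x.sign = (-1)^(j+1)) ↔ ¬ (x.sign = (-1)^j) := by
  have hs : x.sign = 1 ∨ x.sign = -1 := by
    rcases lt_trichotomy x 0 with h | h | h
    · right; exact Int.sign_eq_neg_one_of_neg h
    · exact absurd h hx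
    · left; exact Int.sign_eq_one_of_pos h
  have hp : ((-1:ℤ))^(j+1) = -((-1)^j) := by rw [pow_succ]; ring
  rcases Nat.even_or_odd j with he | ho
  · rw [he.neg_one_pow] at hp ⊢
    rw [hp]
    rcases hs with h | h <;> simp [h]
  · rw [ho.neg_one_pow] at hp ⊢
    rw [hp]
    rcases hs with h | h <;> simp [h]

lemma nplus_le (L : List ℤ) : nplus L ≤ L.length := by
  classical
  calc nplus L ≤ (Finset.range L.length).card := Finset.card_filter_le _ _
    _ = L.length := Finset.card_range _

lemma count_flip (L : List ℤ) (hL : ∀ x ∈ L, x ≠ 0) :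
    ((Finset.range L.length).filter (fun j => (L.getD j 0).sign = (-1)^(j+1))).card
      = L.length - nplus L := by
  classical
  have hco : ∀ j ∈ Finset.range L.length,
      ((L.getD j 0).sign = (-1)^(j+1) ↔ ¬ ((L.getD j 0).sign = (-1)^j)) := by
    intro j hj
    rw [Finset.mem_range] at hj
    have hmem : L.getD j 0 ∈ L := by
      rw [List.getD_eq_getElem L 0 hj]
      exact List.getElem_mem hj
    exact sign_flip_iff (hL _ hmem) j
  rw [Finset.filter_congr (fun j hj => by rw [hco j hj])]
  have := Finset.card_filter_add_card_filter_not
    (s := Finset.range L.length) (p := fun j => (L.getD j 0).sign = (-1)^j)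
  rw [Finset.card_range] at this
  unfold nplus
  omega

lemma nplus_cons (n : ℤ) (L : List ℤ) (hL : ∀ x ∈ L, x ≠ 0) :
    nplus (n :: L) = (L.length - nplus L) + (if 0 < n then 1 else 0) := by
  classical
  unfold nplus
  rw [show (n :: L).length = L.length + 1 from rfl]
  rw [Finset.card_filter, Finset.sum_range_succ']
  have h0 : ((n :: L).getD 0 0) = n := rfl
  have hs : ∀ j : ℕ, ((n :: L).getD (j+1) 0) = L.getD j 0 := fun j => rfl
  simp only [hs, h0, pow_zero]
  rw [← Finset.card_filter]
  have hflip := count_flip L hL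
  unfold nplus at hflip
  have hsign : (n.sign = 1) ↔ (0 < n) := Int.sign_eq_one_iff_pos
  by_cases hn : 0 < n
  · rw [if_pos (hsign.2 hn), if_pos hn]
    omega
  · rw [if_neg (by intro h; exact hn (hsign.1 h)), if_neg hn]
    omega

lemma sval_cons (n : ℤ) (L : List ℤ) (hL : ∀ x ∈ L, x ≠ 0) :
    sval (n :: L) = (if 0 < n then 1 else -1) - sval L := by
  have h1 := nplus_cons n L hL
  have h2 := nplus_le L
  unfold sval
  rw [show (n :: L).length = L.length + 1 from rfl]
  by_cases hn : 0 < n <;> simp only [hn, if_pos, if_neg, if_true, if_false] <;>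
    · rw [h1]
      simp [hn]
      push_cast [Nat.cast_sub h2]
      ring

lemma sval_negL (L : List ℤ) (hL : ∀ x ∈ L, x ≠ 0) :
    sval (negL L) = - sval L := by
  classical
  have hlen : (negL L).length = L.length := List.length_map _
  have hco : ∀ j ∈ Finset.range L.length,
      (((negL L).getD j 0).sign = (-1)^j) ↔ ((L.getD j 0).sign = (-1)^(j+1)) := by
    intro j hj
    rw [Finset.mem_range] at hj
    have hval : (negL L).getD j 0 = -(L.getD j 0) := by
      rw [List.getD_eq_getElem _ 0 (by rw [hlen]; exact hj),
        List.getD_eq_getElem L 0 hj]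
      simp [negL]
    rw [hval, Int.sign_neg, pow_succ]
    constructor <;> intro h <;> linarith
  have hnp : nplus (negL L) = L.length - nplus L := by
    unfold nplus
    rw [hlen, Finset.filter_congr (fun j hj => by rw [hco j hj])]
    exact count_flip L hL
  have h2 := nplus_le L
  unfold sval
  rw [hnp, hlen]
  push_cast [Nat.cast_sub h2]
  ring

lemma nz_of_good {L : List ℤ} (h : goodL L) : ∀ x ∈ L, x ≠ 0 := by
  intro x hx h0
  have := h x hx
  rw [h0] at this
  norm_num at this

lemma nz_negL {L : List ℤ} (h : ∀ x ∈ L, x ≠ 0) : ∀ x ∈ negL L, x ≠ 0 := by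
  intro x hx h0
  have := h _ (of_mem_negL hx)
  omega

lemma nz_alt (k : ℕ) : ∀ x ∈ alt k, x ≠ 0 := nz_of_good (good_alt k)

lemma nz_X1 (m : ℕ) (hm : 2 ≤ m) : ∀ t, ∀ x ∈ X1 m t, x ≠ 0 := by
  intro t
  induction t with
  | zero =>
    intro x hx
    have hmZ : (2:ℤ) ≤ (m:ℤ) := by exact_mod_cast hm
    rcases List.mem_cons.1 hx with rfl | hx
    · omega
    rcases List.mem_cons.1 hx with rfl | hx
    · omega
    · simp at hx
  | succ t ih =>
    intro x hx
    rcases List.mem_cons.1 hx with rfl | hx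
    · omega
    · exact nz_negL ih x hx

lemma nz_X2 (m : ℕ) : ∀ t, ∀ x ∈ X2 m t, x ≠ 0 := by
  intro t
  induction t with
  | zero =>
    intro x hx
    rcases List.mem_cons.1 hx with rfl | hx
    · omega
    · exact nz_negL (nz_alt (m-2)) x hx
  | succ t ih =>
    intro x hx
    rcases List.mem_cons.1 hx with rfl | hx
    · omega
    · exact nz_negL ih x hx

lemma sval_alt : ∀ k : ℕ, sval (alt k) = k := by
  intro k
  induction k with
  | zero => simp [alt, sval, nplus]
  | succ k ih =>
    rw [show alt (k+1) = 2 :: negL (alt k) from rfl,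
      sval_cons 2 _ (nz_negL (nz_alt k)), sval_negL _ (nz_alt k), ih]
    norm_num
    push_cast
    ring

lemma sval_X1 (m : ℕ) (hm : 2 ≤ m) : ∀ t : ℕ, sval (X1 m t) = t := by
  have hmZ : (2:ℤ) ≤ (m:ℤ) := by exact_mod_cast hm
  intro t
  induction t with
  | zero =>
    rw [show X1 m 0 = 2 :: [(m:ℤ)-1] from rfl,
      sval_cons 2 _ (by
        intro x hx
        rcases List.mem_cons.1 hx with rfl | hx
        · omega
        · simp at hx),
      sval_cons ((m:ℤ)-1) [] (by intro x hx; simp at hx)]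
    rw [if_pos (by norm_num), if_pos (by omega)]
    simp [sval, nplus]
  | succ t ih =>
    rw [show X1 m (t+1) = 2 :: negL (X1 m t) from rfl,
      sval_cons 2 _ (nz_negL (nz_X1 m hm t)), sval_negL _ (nz_X1 m hm t), ih]
    norm_num
    push_cast
    ring

lemma sval_X2 (m : ℕ) (hm : 2 ≤ m) : ∀ t : ℕ, sval (X2 m t) = (t:ℤ) + (m:ℤ) - 1 := by
  intro t
  induction t with
  | zero =>
    rw [show X2 m 0 = 3 :: negL (alt (m-2)) from rfl,
      sval_cons 3 _ (nz_negL (nz_alt (m-2))), sval_negL _ (nz_alt (m-2)), sval_alt]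
    rw [if_pos (by norm_num)]
    have : ((m - 2 : ℕ) : ℤ) = (m:ℤ) - 2 := by
      rw [Nat.cast_sub hm]; norm_num
    rw [this]
    push_cast
    ring
  | succ t ih =>
    rw [show X2 m (t+1) = 2 :: negL (X2 m t) from rfl,
      sval_cons 2 _ (nz_negL (nz_X2 m t)), sval_negL _ (nz_X2 m t), ih]
    rw [if_pos (by norm_num)]
    push_cast
    ring

@[simp] lemma weight_nil : weightProd [] = 1 := rfl
@[simp] lemma weight_cons (n : ℤ) (L : List ℤ) :
    weightProd (n :: L) = (|n| - 1) * weightProd L := by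
  simp [weightProd]

lemma weight_negL (L : List ℤ) : weightProd (negL L) = weightProd L := by
  induction L with
  | nil => rfl
  | cons n T ih => rw [negL_cons, weight_cons, weight_cons, abs_neg, ih]

lemma weight_alt : ∀ k : ℕ, weightProd (alt k) = 1 := by
  intro k
  induction k with
  | zero => rfl
  | succ k ih =>
    rw [show alt (k+1) = 2 :: negL (alt k) from rfl, weight_cons, weight_negL, ih]
    norm_num

lemma weight_X1 (m : ℕ) (hm : 2 ≤ m) : ∀ t : ℕ, weightProd (X1 m t) = (m:ℤ) - 2 := by
  have hmZ : (2:ℤ) ≤ (m:ℤ) := by exact_mod_cast hm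
  intro t
  induction t with
  | zero =>
    rw [show X1 m 0 = 2 :: [(m:ℤ)-1] from rfl, weight_cons,
      show [(m:ℤ)-1] = ((m:ℤ)-1) :: ([] : List ℤ) from rfl, weight_cons, weight_nil]
    rw [abs_of_nonneg (by omega : (0:ℤ) ≤ (m:ℤ)-1)]
    norm_num
    omega
  | succ t ih =>
    rw [show X1 m (t+1) = 2 :: negL (X1 m t) from rfl, weight_cons, weight_negL, ih]
    norm_num

lemma weight_X2 (m : ℕ) : ∀ t : ℕ, weightProd (X2 m t) = 2 := by
  intro t
  induction t with
  | zero =>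
    rw [show X2 m 0 = 3 :: negL (alt (m-2)) from rfl, weight_cons, weight_negL,
      weight_alt]
    norm_num
  | succ t ih =>
    rw [show X2 m (t+1) = 2 :: negL (X2 m t) from rfl, weight_cons, weight_negL, ih]
    norm_num

lemma X1_head (m : ℕ) : ∀ t, ∃ T, X1 m t = 2 :: T := by
  intro t
  cases t with
  | zero => exact ⟨_, rfl⟩
  | succ t => exact ⟨_, rfl⟩

lemma X2_head (m : ℕ) : ∀ t, ∃ a T, X2 m t = a :: T ∧ (a = 2 ∨ a = 3) := by
  intro t
  cases t with
  | zero => exact ⟨3, _, rfl, Or.inr rfl⟩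
  | succ t => exact ⟨2, _, rfl, Or.inl rfl⟩

lemma X1_ne_X2 (m : ℕ) : ∀ t, X1 m t ≠ X2 m t := by
  intro t
  induction t with
  | zero =>
    intro h
    rw [show X1 m 0 = 2 :: [(m:ℤ)-1] from rfl,
      show X2 m 0 = 3 :: negL (alt (m-2)) from rfl] at h
    injection h with h1 _
    omega
  | succ t ih =>
    intro h
    rw [show X1 m (t+1) = 2 :: negL (X1 m t) from rfl,
      show X2 m (t+1) = 2 :: negL (X2 m t) from rfl] at h
    injection h with _ h2
    exact ih (by rw [← negL_negL (X1 m t), h2, negL_negL])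

lemma even_of_negL {L : List ℤ} (h : ∀ x ∈ negL L, Even x) : ∀ x ∈ L, Even x := by
  intro x hx
  obtain ⟨b, hb⟩ := h (-x) (neg_mem_negL hx)
  exact ⟨-b, by omega⟩

lemma not_even_X1 (m : ℕ) (hme : Even m) : ∀ t, ¬ (∀ x ∈ X1 m t, Even x) := by
  intro t
  induction t with
  | zero =>
    intro h
    have h1 := h ((m:ℤ)-1) (by simp [X1])
    obtain ⟨a, ha⟩ := hme
    obtain ⟨b, hb⟩ := h1
    omega
  | succ t ih =>
    intro h
    exact ih (even_of_negL (fun x hx => h x (List.mem_cons_of_mem _ hx)))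

lemma not_even_X2 (m : ℕ) : ∀ t, ¬ (∀ x ∈ X2 m t, Even x) := by
  intro t
  induction t with
  | zero =>
    intro h
    have h1 := h 3 (by simp [X2])
    obtain ⟨b, hb⟩ := h1
    omega
  | succ t ih =>
    intro h
    exact ih (even_of_negL (fun x hx => h x (List.mem_cons_of_mem _ hx)))

-- ### cf values of the families

lemma cf_X1 (m : ℕ) (hm : 2 ≤ m) : ∀ t : ℕ,
    cf (X1 m t) = (((t:ℚ)+1)*(m:ℚ) - 1)/(((t:ℚ)+2)*(m:ℚ) - 1) := by
  have hmQ : (2:ℚ) ≤ (m:ℚ) := by exact_mod_cast hm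
  intro t
  induction t with
  | zero =>
    have h1 : (m:ℚ) - 1 ≠ 0 := by nlinarith
    rw [show X1 m 0 = (2:ℤ) :: [(m:ℤ)-1] from rfl, cf_cons,
      show [(m:ℤ)-1] = ((m:ℤ)-1) :: ([] : List ℤ) from rfl, cf_cons, cf_nil, add_zero]
    push_cast
    rw [show (2:ℚ) + 1/((m:ℚ)-1) = (2*(m:ℚ)-1)/((m:ℚ)-1) by field_simp; ring,
      one_div_div]
    ring_nf
  | succ t ih =>
    have ht0 : (0:ℚ) ≤ (t:ℚ) := Nat.cast_nonneg t
    have hden : ((t:ℚ)+2)*(m:ℚ) - 1 ≠ 0 := by nlinarith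
    rw [show X1 m (t+1) = 2 :: negL (X1 m t) from rfl, cf_cons, cf_negL, ih]
    push_cast
    rw [show (2:ℚ) + -((((t:ℚ)+1)*(m:ℚ) - 1)/(((t:ℚ)+2)*(m:ℚ) - 1))
        = (((t:ℚ)+3)*(m:ℚ) - 1)/(((t:ℚ)+2)*(m:ℚ) - 1) by
      rw [eq_div_iff hden, add_mul, neg_mul, div_mul_cancel₀ _ hden]; ring, one_div_div]
    ring_nf

lemma cf_X2 (m : ℕ) (hm : 2 ≤ m) : ∀ t : ℕ,
    cf (X2 m t) = (((t:ℚ)+1)*(m:ℚ) - 1)/(((t:ℚ)+2)*(m:ℚ) - 1) := by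
  have hmQ : (2:ℚ) ≤ (m:ℚ) := by exact_mod_cast hm
  intro t
  induction t with
  | zero =>
    have h1 : (m:ℚ) - 1 ≠ 0 := by nlinarith
    have hcast : ((m - 2 : ℕ) : ℚ) = (m:ℚ) - 2 := by
      rw [Nat.cast_sub hm]; norm_num
    rw [show X2 m 0 = (3:ℤ) :: negL (alt (m-2)) from rfl, cf_cons, cf_negL,
      cf_alt, hcast]
    push_cast
    rw [show (3:ℚ) + -(((m:ℚ)-2)/(((m:ℚ)-2) + 1)) = (2*(m:ℚ)-1)/((m:ℚ)-1) by
      push_cast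
      rw [show ((m:ℚ)-2) + 1 = (m:ℚ) - 1 by ring]
      field_simp; ring, one_div_div]
    ring_nf
  | succ t ih =>
    have ht0 : (0:ℚ) ≤ (t:ℚ) := Nat.cast_nonneg t
    have hden : ((t:ℚ)+2)*(m:ℚ) - 1 ≠ 0 := by nlinarith
    rw [show X2 m (t+1) = 2 :: negL (X2 m t) from rfl, cf_cons, cf_negL, ih]
    push_cast
    rw [show (2:ℚ) + -((((t:ℚ)+1)*(m:ℚ) - 1)/(((t:ℚ)+2)*(m:ℚ) - 1))
        = (((t:ℚ)+3)*(m:ℚ) - 1)/(((t:ℚ)+2)*(m:ℚ) - 1) by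
      rw [eq_div_iff hden, add_mul, neg_mul, div_mul_cancel₀ _ hden]; ring, one_div_div]
    ring_nf

-- ### the four elements

def LA (ℓ m : ℕ) : List ℤ := [(ℓ:ℤ), -(m:ℤ)]
def LB (ℓ m : ℕ) : List ℤ := ((ℓ:ℤ) - 1) :: alt (m - 1)
def LC (ℓ m : ℕ) : List ℤ := negL (X1 m (ℓ - 2))
def LD (ℓ m : ℕ) : List ℤ := negL (X2 m (ℓ - 2))

lemma castl2 {ℓ : ℕ} (hl : 2 ≤ ℓ) : ((ℓ - 2 : ℕ) : ℚ) = (ℓ:ℚ) - 2 := by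
  rw [Nat.cast_sub hl]; norm_num

lemma good_X1 (m : ℕ) (hm3 : 3 ≤ m) : ∀ t, goodL (X1 m t) := by
  have hmZ : (3:ℤ) ≤ (m:ℤ) := by exact_mod_cast hm3
  intro t
  induction t with
  | zero =>
    intro x hx
    rcases List.mem_cons.1 hx with rfl | hx
    · norm_num
    rcases List.mem_cons.1 hx with rfl | hx
    · rw [abs_of_nonneg (by omega)]; omega
    · simp at hx
  | succ t ih =>
    intro x hx
    rcases List.mem_cons.1 hx with rfl | hx
    · norm_num
    · exact goodL_negL ih x hx

lemma good_X2 (m : ℕ) : ∀ t, goodL (X2 m t) := by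
  intro t
  induction t with
  | zero =>
    intro x hx
    rcases List.mem_cons.1 hx with rfl | hx
    · norm_num
    · exact goodL_negL (good_alt (m-2)) x hx
  | succ t ih =>
    intro x hx
    rcases List.mem_cons.1 hx with rfl | hx
    · norm_num
    · exact goodL_negL ih x hx

section Members

variable {ℓ m : ℕ}

lemma auxQ (hm : 2 ≤ m) (hml : m ≤ ℓ) :
    (2:ℚ) ≤ (m:ℚ) ∧ (2:ℚ) ≤ (ℓ:ℚ) ∧ (0:ℚ) < (ℓ:ℚ)*(m:ℚ) - 1 := by
  have hl : 2 ≤ ℓ := le_trans hm hml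
  have h1 : (2:ℚ) ≤ (m:ℚ) := by exact_mod_cast hm
  have h2 : (2:ℚ) ≤ (ℓ:ℚ) := by exact_mod_cast hl
  exact ⟨h1, h2, by nlinarith⟩

lemma LA_mem (hm : 2 ≤ m) (hml : m ≤ ℓ) : LA ℓ m ∈ Sset ((ℓ:ℤ)*(m:ℤ) - 1) (m:ℤ) := by
  obtain ⟨hmQ, hlQ, hα⟩ := auxQ hm hml
  have hl : 2 ≤ ℓ := le_trans hm hml
  constructor
  · intro n hn
    rcases List.mem_cons.1 hn with rfl | hn
    · rw [abs_of_nonneg (by positivity)]; exact_mod_cast hl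
    rcases List.mem_cons.1 hn with rfl | hn
    · rw [abs_neg, abs_of_nonneg (by positivity)]; exact_mod_cast hm
    · simp at hn
  · left
    show cf ((ℓ:ℤ) :: [-(m:ℤ)]) = _
    rw [cf_cons, show [-(m:ℤ)] = (-(m:ℤ)) :: ([] : List ℤ) from rfl, cf_cons, cf_nil,
      add_zero]
    push_cast
    have hm0 : (m:ℚ) ≠ 0 := by positivity
    rw [show (ℓ:ℚ) + 1/(-(m:ℚ)) = ((ℓ:ℚ)*(m:ℚ) - 1)/(m:ℚ) by
      rw [div_neg]; field_simp; ring, one_div_div]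

lemma LB_mem (hm : 2 ≤ m) (hml : m ≤ ℓ) (hl3 : 3 ≤ ℓ) : LB ℓ m ∈ Sset ((ℓ:ℤ)*(m:ℤ) - 1) (m:ℤ) := by
  obtain ⟨hmQ, hlQ, hα⟩ := auxQ hm hml
  have hlQ3 : (3:ℚ) ≤ (ℓ:ℚ) := by exact_mod_cast hl3
  constructor
  · intro n hn
    rcases List.mem_cons.1 hn with rfl | hn
    · have h3 : (3:ℤ) ≤ (ℓ:ℤ) := by exact_mod_cast hl3
      rw [abs_of_nonneg (by omega)]
      omega
    · exact good_alt (m-1) n hn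
  · left
    rw [LB, cf_cons, cf_alt,
      show ((m - 1 : ℕ):ℚ) = (m:ℚ) - 1 by rw [Nat.cast_sub (by omega)]; norm_num]
    push_cast
    rw [show ((ℓ:ℚ) - 1) + ((m:ℚ)-1)/(((m:ℚ)-1) + 1) = ((ℓ:ℚ)*(m:ℚ) - 1)/(m:ℚ) by
      rw [show ((m:ℚ)-1) + 1 = (m:ℚ) by ring]
      field_simp
      ring, one_div_div]

lemma LC_mem (hm : 2 ≤ m) (hml : m ≤ ℓ) (hm3 : 3 ≤ m) : LC ℓ m ∈ Sset ((ℓ:ℤ)*(m:ℤ) - 1) (m:ℤ) := by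
  obtain ⟨hmQ, hlQ, hα⟩ := auxQ hm hml
  have hl : 2 ≤ ℓ := le_trans hm hml
  constructor
  · exact goodL_negL (good_X1 m hm3 (ℓ-2))
  · right
    rw [LC, cf_negL, cf_X1 m hm, castl2 hl]
    push_cast
    rw [← neg_div, div_eq_div_iff (by nlinarith) (by nlinarith)]
    ring

lemma LD_mem (hm : 2 ≤ m) (hml : m ≤ ℓ) : LD ℓ m ∈ Sset ((ℓ:ℤ)*(m:ℤ) - 1) (m:ℤ) := by
  obtain ⟨hmQ, hlQ, hα⟩ := auxQ hm hml
  have hl : 2 ≤ ℓ := le_trans hm hml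
  constructor
  · exact goodL_negL (good_X2 m (ℓ-2))
  · right
    rw [LD, cf_negL, cf_X2 m hm, castl2 hl]
    push_cast
    rw [← neg_div, div_eq_div_iff (by nlinarith) (by nlinarith)]
    ring

lemma classify (hm : 2 ≤ m) (hml : m ≤ ℓ) {L : List ℤ} (hL : L ∈ Sset ((ℓ:ℤ)*(m:ℤ) - 1) (m:ℤ)) :
    L = LA ℓ m ∨ (3 ≤ ℓ ∧ L = LB ℓ m) ∨ (3 ≤ m ∧ L = LC ℓ m) ∨ L = LD ℓ m := by
  obtain ⟨hmQ, hlQ, hα⟩ := auxQ hm hml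
  have hl : 2 ≤ ℓ := le_trans hm hml
  obtain ⟨hg, hcf | hcf⟩ := hL
  · push_cast at hcf
    rcases exp_pos ℓ m hm hl L hg hcf with h | ⟨hl3, h⟩
    · exact Or.inl h
    · exact Or.inr (Or.inl ⟨hl3, h⟩)
  · have h2 : cf (negL L) = ((((ℓ-2:ℕ):ℚ)+1)*(m:ℚ) - 1)/((((ℓ-2:ℕ):ℚ)+2)*(m:ℚ) - 1) := by
      rw [cf_negL, hcf, castl2 hl]
      push_cast
      rw [← neg_div, div_eq_div_iff (by nlinarith) (by nlinarith)]
      ring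
    rcases exp_X m hm (ℓ-2) (negL L) (goodL_negL hg) h2 with h | ⟨hm3, h⟩
    · refine Or.inr (Or.inr (Or.inr ?_))
      rw [← negL_negL L, h]
      rfl
    · refine Or.inr (Or.inr (Or.inl ⟨hm3, ?_⟩))
      rw [← negL_negL L, h]
      rfl

end Members

section Values

variable {ℓ m : ℕ}

lemma castl2' (hl : 2 ≤ ℓ) : ((ℓ - 2 : ℕ) : ℤ) = (ℓ:ℤ) - 2 := by
  rw [Nat.cast_sub hl]; norm_num

lemma sval_nil : sval [] = 0 := by simp [sval, nplus]

lemma sval_LA (hm : 2 ≤ m) (hl : 2 ≤ ℓ) : sval (LA ℓ m) = 2 := by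
  have hmZ : (2:ℤ) ≤ (m:ℤ) := by exact_mod_cast hm
  have hlZ : (2:ℤ) ≤ (ℓ:ℤ) := by exact_mod_cast hl
  rw [show LA ℓ m = (ℓ:ℤ) :: [-(m:ℤ)] from rfl,
    sval_cons _ _ (by
      intro x hx
      rcases List.mem_cons.1 hx with rfl | hx
      · omega
      · simp at hx),
    sval_cons (-(m:ℤ)) [] (by intro x hx; simp at hx), sval_nil]
  rw [if_pos (by omega), if_neg (by omega)]
  ring

lemma sval_LB (hm : 2 ≤ m) (hl : 2 ≤ ℓ) : sval (LB ℓ m) = 2 - (m:ℤ) := by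
  have hmZ : (2:ℤ) ≤ (m:ℤ) := by exact_mod_cast hm
  have hlZ : (2:ℤ) ≤ (ℓ:ℤ) := by exact_mod_cast hl
  rw [LB, sval_cons _ _ (nz_alt (m-1)), sval_alt, if_pos (by omega),
    show ((m-1:ℕ):ℤ) = (m:ℤ) - 1 by rw [Nat.cast_sub (by omega)]; norm_num]
  ring

lemma sval_LC (hm : 2 ≤ m) (hl : 2 ≤ ℓ) : sval (LC ℓ m) = 2 - (ℓ:ℤ) := by
  rw [LC, sval_negL _ (nz_X1 m hm (ℓ-2)), sval_X1 m hm, castl2' hl]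
  ring

lemma sval_LD (hm : 2 ≤ m) (hl : 2 ≤ ℓ) : sval (LD ℓ m) = 3 - (ℓ:ℤ) - (m:ℤ) := by
  rw [LD, sval_negL _ (nz_X2 m (ℓ-2)), sval_X2 m hm, castl2' hl]
  ring

lemma weight_LA (hm : 2 ≤ m) (hl : 2 ≤ ℓ) :
    weightProd (LA ℓ m) = ((ℓ:ℤ)-1)*((m:ℤ)-1) := by
  have hmZ : (2:ℤ) ≤ (m:ℤ) := by exact_mod_cast hm
  have hlZ : (2:ℤ) ≤ (ℓ:ℤ) := by exact_mod_cast hl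
  rw [show LA ℓ m = (ℓ:ℤ) :: [-(m:ℤ)] from rfl, weight_cons,
    show [-(m:ℤ)] = (-(m:ℤ)) :: ([] : List ℤ) from rfl, weight_cons, weight_nil,
    abs_of_nonneg (by omega : (0:ℤ) ≤ (ℓ:ℤ)), abs_neg,
    abs_of_nonneg (by omega : (0:ℤ) ≤ (m:ℤ))]
  ring

lemma weight_LB (hm : 2 ≤ m) (hl : 2 ≤ ℓ) : weightProd (LB ℓ m) = (ℓ:ℤ) - 2 := by
  have hlZ : (2:ℤ) ≤ (ℓ:ℤ) := by exact_mod_cast hl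
  rw [LB, weight_cons, weight_alt, abs_of_nonneg (by omega : (0:ℤ) ≤ (ℓ:ℤ)-1)]
  ring

lemma weight_LC (hm : 2 ≤ m) : weightProd (LC ℓ m) = (m:ℤ) - 2 := by
  rw [LC, weight_negL, weight_X1 m hm]

lemma weight_LD : weightProd (LD ℓ m) = 2 := by
  rw [LD, weight_negL, weight_X2 m]

lemma LA_ne_LB : LA ℓ m ≠ LB ℓ m := by
  intro h
  rw [LA, LB] at h
  injection h with h1 _
  omega

lemma LA_ne_LC : LA ℓ m ≠ LC ℓ m := by
  intro h
  obtain ⟨T, hT⟩ := X1_head m (ℓ-2)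
  rw [LA, LC, hT, negL_cons] at h
  injection h with h1 _
  omega

lemma LA_ne_LD : LA ℓ m ≠ LD ℓ m := by
  intro h
  obtain ⟨a, T, hT, ha⟩ := X2_head m (ℓ-2)
  rw [LA, LD, hT, negL_cons] at h
  injection h with h1 _
  rcases ha with rfl | rfl <;> omega

lemma LB_ne_LC : LB ℓ m ≠ LC ℓ m := by
  intro h
  obtain ⟨T, hT⟩ := X1_head m (ℓ-2)
  rw [LB, LC, hT, negL_cons] at h
  injection h with h1 _
  omega

lemma LB_ne_LD : LB ℓ m ≠ LD ℓ m := by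
  intro h
  obtain ⟨a, T, hT, ha⟩ := X2_head m (ℓ-2)
  rw [LB, LD, hT, negL_cons] at h
  injection h with h1 _
  rcases ha with rfl | rfl <;> omega

lemma LC_ne_LD : LC ℓ m ≠ LD ℓ m := by
  intro h
  apply X1_ne_X2 m (ℓ-2)
  have h' : negL (X1 m (ℓ-2)) = negL (X2 m (ℓ-2)) := h
  rw [← negL_negL (X1 m (ℓ-2)), h', negL_negL]

end Values

lemma sum_eval (ℓ m : ℕ) (hm : 2 ≤ m) (hml : m ≤ ℓ) (s0 : ℤ) :
    ∑ᶠ L ∈ Sset ((ℓ:ℤ)*(m:ℤ) - 1) (m:ℤ),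
      ((|(0:ℤ) - 2 * (sval L - s0) * 1| * weightProd L : ℤ) : ℚ) =
    ((|2*(2 - s0)| * (((ℓ:ℤ)-1)*((m:ℤ)-1)) + |2*(2-(m:ℤ)-s0)| * ((ℓ:ℤ)-2)
      + |2*(2-(ℓ:ℤ)-s0)| * ((m:ℤ)-2) + |2*(3-(ℓ:ℤ)-(m:ℤ)-s0)| * 2 : ℤ) : ℚ) := by
  classical
  have hl2 : 2 ≤ ℓ := le_trans hm hml
  have hmZ : (2:ℤ) ≤ (m:ℤ) := by exact_mod_cast hm
  have hlZ : (2:ℤ) ≤ (ℓ:ℤ) := by exact_mod_cast hl2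
  have hfA : |(0:ℤ) - 2 * (sval (LA ℓ m) - s0) * 1| * weightProd (LA ℓ m)
      = |2*(2 - s0)| * (((ℓ:ℤ)-1)*((m:ℤ)-1)) := by
    rw [sval_LA hm hl2, weight_LA hm hl2]
    congr 1
    rw [show (0:ℤ) - 2*((2:ℤ) - s0)*1 = -(2*(2 - s0)) by ring, abs_neg]
  have hfB : |(0:ℤ) - 2 * (sval (LB ℓ m) - s0) * 1| * weightProd (LB ℓ m)
      = |2*(2-(m:ℤ)-s0)| * ((ℓ:ℤ)-2) := by
    rw [sval_LB hm hl2, weight_LB hm hl2]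
    congr 1
    rw [show (0:ℤ) - 2*((2 - (m:ℤ)) - s0)*1 = -(2*(2-(m:ℤ)-s0)) by ring, abs_neg]
  have hfC : |(0:ℤ) - 2 * (sval (LC ℓ m) - s0) * 1| * weightProd (LC ℓ m)
      = |2*(2-(ℓ:ℤ)-s0)| * ((m:ℤ)-2) := by
    rw [sval_LC hm hl2, weight_LC hm]
    congr 1
    rw [show (0:ℤ) - 2*((2 - (ℓ:ℤ)) - s0)*1 = -(2*(2-(ℓ:ℤ)-s0)) by ring, abs_neg]
  have hfD : |(0:ℤ) - 2 * (sval (LD ℓ m) - s0) * 1| * weightProd (LD ℓ m)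
      = |2*(3-(ℓ:ℤ)-(m:ℤ)-s0)| * 2 := by
    rw [sval_LD hm hl2, weight_LD]
    congr 1
    rw [show (0:ℤ) - 2*((3 - (ℓ:ℤ) - (m:ℤ)) - s0)*1 = -(2*(3-(ℓ:ℤ)-(m:ℤ)-s0)) by ring,
      abs_neg]
  by_cases hm3 : 3 ≤ m
  · have hl3 : 3 ≤ ℓ := le_trans hm3 hml
    have hSet : Sset ((ℓ:ℤ)*(m:ℤ) - 1) (m:ℤ)
        = (↑({LA ℓ m, LB ℓ m, LC ℓ m, LD ℓ m} : Finset (List ℤ)) : Set (List ℤ)) := by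
      ext L
      simp only [Finset.coe_insert, Set.mem_insert_iff, Finset.coe_singleton,
        Set.mem_singleton_iff]
      constructor
      · intro hL
        rcases classify hm hml hL with h | ⟨-, h⟩ | ⟨-, h⟩ | h
        exacts [Or.inl h, Or.inr (Or.inl h), Or.inr (Or.inr (Or.inl h)),
          Or.inr (Or.inr (Or.inr h))]
      · rintro (rfl | rfl | rfl | rfl)
        exacts [LA_mem hm hml, LB_mem hm hml hl3, LC_mem hm hml hm3, LD_mem hm hml]
    rw [hSet, finsum_mem_coe_finset]
    rw [Finset.sum_insert (by
        simp only [Finset.mem_insert, Finset.mem_singleton]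
        push_neg
        exact ⟨LA_ne_LB, LA_ne_LC, LA_ne_LD⟩),
      Finset.sum_insert (by
        simp only [Finset.mem_insert, Finset.mem_singleton]
        push_neg
        exact ⟨LB_ne_LC, LB_ne_LD⟩),
      Finset.sum_insert (by
        simp only [Finset.mem_singleton]
        exact LC_ne_LD),
      Finset.sum_singleton]
    have hZ : |(0:ℤ) - 2 * (sval (LA ℓ m) - s0) * 1| * weightProd (LA ℓ m)
        + (|(0:ℤ) - 2 * (sval (LB ℓ m) - s0) * 1| * weightProd (LB ℓ m)
        + (|(0:ℤ) - 2 * (sval (LC ℓ m) - s0) * 1| * weightProd (LC ℓ m)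
        + |(0:ℤ) - 2 * (sval (LD ℓ m) - s0) * 1| * weightProd (LD ℓ m)))
        = |2*(2 - s0)| * (((ℓ:ℤ)-1)*((m:ℤ)-1)) + |2*(2-(m:ℤ)-s0)| * ((ℓ:ℤ)-2)
          + |2*(2-(ℓ:ℤ)-s0)| * ((m:ℤ)-2) + |2*(3-(ℓ:ℤ)-(m:ℤ)-s0)| * 2 := by
      rw [hfA, hfB, hfC, hfD]
      ring
    exact_mod_cast hZ
  · have hm2 : m = 2 := by omega
    have hmZ2 : (m:ℤ) = 2 := by omega
    by_cases hl3 : 3 ≤ ℓ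
    · have hSet : Sset ((ℓ:ℤ)*(m:ℤ) - 1) (m:ℤ)
          = (↑({LA ℓ m, LB ℓ m, LD ℓ m} : Finset (List ℤ)) : Set (List ℤ)) := by
        ext L
        simp only [Finset.coe_insert, Set.mem_insert_iff, Finset.coe_singleton,
          Set.mem_singleton_iff]
        constructor
        · intro hL
          rcases classify hm hml hL with h | ⟨-, h⟩ | ⟨hc, h⟩ | h
          · exact Or.inl h
          · exact Or.inr (Or.inl h)
          · omega
          · exact Or.inr (Or.inr h)
        · rintro (rfl | rfl | rfl)
          exacts [LA_mem hm hml, LB_mem hm hml hl3, LD_mem hm hml]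
      rw [hSet, finsum_mem_coe_finset]
      rw [Finset.sum_insert (by
          simp only [Finset.mem_insert, Finset.mem_singleton]
          push_neg
          exact ⟨LA_ne_LB, LA_ne_LD⟩),
        Finset.sum_insert (by
          simp only [Finset.mem_singleton]
          exact LB_ne_LD),
        Finset.sum_singleton]
      have hZ : |(0:ℤ) - 2 * (sval (LA ℓ m) - s0) * 1| * weightProd (LA ℓ m)
          + (|(0:ℤ) - 2 * (sval (LB ℓ m) - s0) * 1| * weightProd (LB ℓ m)
          + |(0:ℤ) - 2 * (sval (LD ℓ m) - s0) * 1| * weightProd (LD ℓ m))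
          = |2*(2 - s0)| * (((ℓ:ℤ)-1)*((m:ℤ)-1)) + |2*(2-(m:ℤ)-s0)| * ((ℓ:ℤ)-2)
            + |2*(2-(ℓ:ℤ)-s0)| * ((m:ℤ)-2) + |2*(3-(ℓ:ℤ)-(m:ℤ)-s0)| * 2 := by
        rw [hfA, hfB, hfD, show (m:ℤ) - 2 = 0 by omega, mul_zero]
        ring
      exact_mod_cast hZ
    · have hl2' : ℓ = 2 := by omega
      have hlZ2 : (ℓ:ℤ) = 2 := by omega
      have hSet : Sset ((ℓ:ℤ)*(m:ℤ) - 1) (m:ℤ)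
          = (↑({LA ℓ m, LD ℓ m} : Finset (List ℤ)) : Set (List ℤ)) := by
        ext L
        simp only [Finset.coe_insert, Set.mem_insert_iff, Finset.coe_singleton,
          Set.mem_singleton_iff]
        constructor
        · intro hL
          rcases classify hm hml hL with h | ⟨hc, h⟩ | ⟨hc, h⟩ | h
          · exact Or.inl h
          · omega
          · omega
          · exact Or.inr h
        · rintro (rfl | rfl)
          exacts [LA_mem hm hml, LD_mem hm hml]
      rw [hSet, finsum_mem_coe_finset]
      rw [Finset.sum_insert (by
          simp only [Finset.mem_singleton]
          exact LA_ne_LD),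
        Finset.sum_singleton]
      have hZ : |(0:ℤ) - 2 * (sval (LA ℓ m) - s0) * 1| * weightProd (LA ℓ m)
          + |(0:ℤ) - 2 * (sval (LD ℓ m) - s0) * 1| * weightProd (LD ℓ m)
          = |2*(2 - s0)| * (((ℓ:ℤ)-1)*((m:ℤ)-1)) + |2*(2-(m:ℤ)-s0)| * ((ℓ:ℤ)-2)
            + |2*(2-(ℓ:ℤ)-s0)| * ((m:ℤ)-2) + |2*(3-(ℓ:ℤ)-(m:ℤ)-s0)| * 2 := by
        rw [hfA, hfD, show (m:ℤ) - 2 = 0 by omega, show (ℓ:ℤ) - 2 = 0 by omega,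
          mul_zero, mul_zero]
        ring
      exact_mod_cast hZ

end CS

/-- Theorem (`M`-degree of the `Â`-polynomial of `J(ℓ,m)`, `α = ℓm−1`, `β = m`,
`ℓ ≥ m ≥ 2`): `Φ(0,1) = 2ℓm − 2` if `ℓ, m` both even,
`Φ(0,1) = m²(ℓ−1) − (m−1)(m−2)` if `ℓ` is odd, and
`Φ(0,1) = m(ℓ−1)² − (ℓ−m) + 2(m−1)` if `m` is odd. -/
theorem Mdegree_J_ell_m (ℓ m : ℕ) (hm : 2 ≤ m) (hml : m ≤ ℓ)
    (hpar : Even ℓ ∨ Even m) (n₀ : List ℤ)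
    (hn₀S : n₀ ∈ Sset ((ℓ : ℤ) * m - 1) (m : ℤ)) (hn₀even : ∀ n ∈ n₀, Even n) :
    ((Even ℓ ∧ Even m) →
      totalSeminorm ((ℓ : ℤ) * m - 1) (m : ℤ) n₀ 0 1 =
        2 * (ℓ : ℚ) * (m : ℚ) - 2) ∧
    (Odd ℓ →
      totalSeminorm ((ℓ : ℤ) * m - 1) (m : ℤ) n₀ 0 1 =
        (m : ℚ) ^ 2 * ((ℓ : ℚ) - 1) - ((m : ℚ) - 1) * ((m : ℚ) - 2)) ∧
    (Odd m →
      totalSeminorm ((ℓ : ℤ) * m - 1) (m : ℤ) n₀ 0 1 =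
        (m : ℚ) * ((ℓ : ℚ) - 1) ^ 2 - ((ℓ : ℚ) - (m : ℚ)) + 2 * ((m : ℚ) - 1)) := by
  classical
  have hl2 : 2 ≤ ℓ := le_trans hm hml
  have hmZ : (2:ℤ) ≤ (m:ℤ) := by exact_mod_cast hm
  have hlZ : (2:ℤ) ≤ (ℓ:ℤ) := by exact_mod_cast hl2
  have hmlZ : (m:ℤ) ≤ (ℓ:ℤ) := by exact_mod_cast hml
  have hclass := CS.classify hm hml hn₀S
  refine ⟨?_, ?_, ?_⟩
  · rintro ⟨hle, hme⟩
    have hs0 : sval n₀ = 2 := by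
      rcases hclass with rfl | ⟨hl3, rfl⟩ | ⟨hm3, rfl⟩ | rfl
      · exact CS.sval_LA hm hl2
      · exfalso
        obtain ⟨c, hc⟩ := hn₀even ((ℓ:ℤ)-1) List.mem_cons_self
        obtain ⟨a, ha⟩ := hle
        omega
      · exact absurd (CS.even_of_negL hn₀even) (CS.not_even_X1 m hme (ℓ-2))
      · exact absurd (CS.even_of_negL hn₀even) (CS.not_even_X2 m (ℓ-2))
    simp only [totalSeminorm, hs0]
    rw [CS.sum_eval ℓ m hm hml 2]
    rw [show |2*((2:ℤ) - 2)| = 0 by norm_num,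
      show |2*(2-(m:ℤ)-2)| = 2*(m:ℤ) by
        rw [show 2*(2-(m:ℤ)-2) = -(2*(m:ℤ)) by ring, abs_neg]
        exact abs_of_nonneg (by omega),
      show |2*(2-(ℓ:ℤ)-2)| = 2*(ℓ:ℤ) by
        rw [show 2*(2-(ℓ:ℤ)-2) = -(2*(ℓ:ℤ)) by ring, abs_neg]
        exact abs_of_nonneg (by omega),
      show |2*(3-(ℓ:ℤ)-(m:ℤ)-2)| = 2*((ℓ:ℤ)+(m:ℤ)-1) by
        rw [show 2*(3-(ℓ:ℤ)-(m:ℤ)-2) = -(2*((ℓ:ℤ)+(m:ℤ)-1)) by ring, abs_neg]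
        exact abs_of_nonneg (by omega)]
    simp only [Int.cast_zero, abs_zero, neg_zero]
    push_cast
    ring
  · intro hodd
    have hme : Even m := by
      rcases hpar with h | h
      · exact absurd hodd (Nat.not_odd_iff_even.2 h)
      · exact h
    have hs0 : sval n₀ = 2 - (m:ℤ) := by
      rcases hclass with rfl | ⟨hl3, rfl⟩ | ⟨hm3, rfl⟩ | rfl
      · exfalso
        obtain ⟨c, hc⟩ := hn₀even ((ℓ:ℤ)) List.mem_cons_self
        obtain ⟨a, ha⟩ := hodd
        omega
      · exact CS.sval_LB hm hl2
      · exact absurd (CS.even_of_negL hn₀even) (CS.not_even_X1 m hme (ℓ-2))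
      · exact absurd (CS.even_of_negL hn₀even) (CS.not_even_X2 m (ℓ-2))
    simp only [totalSeminorm, hs0]
    rw [CS.sum_eval ℓ m hm hml (2 - (m:ℤ))]
    rw [show |2*((2:ℤ) - (2 - (m:ℤ)))| = 2*(m:ℤ) by
        rw [show 2*((2:ℤ) - (2 - (m:ℤ))) = 2*(m:ℤ) by ring]
        exact abs_of_nonneg (by omega),
      show |2*(2-(m:ℤ)-(2 - (m:ℤ)))| = 0 by
        rw [show 2*(2-(m:ℤ)-(2 - (m:ℤ))) = (0:ℤ) by ring]
        exact abs_zero,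
      show |2*(2-(ℓ:ℤ)-(2 - (m:ℤ)))| = 2*((ℓ:ℤ)-(m:ℤ)) by
        rw [show 2*(2-(ℓ:ℤ)-(2 - (m:ℤ))) = -(2*((ℓ:ℤ)-(m:ℤ))) by ring, abs_neg]
        exact abs_of_nonneg (by omega),
      show |2*(3-(ℓ:ℤ)-(m:ℤ)-(2 - (m:ℤ)))| = 2*((ℓ:ℤ)-1) by
        rw [show 2*(3-(ℓ:ℤ)-(m:ℤ)-(2 - (m:ℤ))) = -(2*((ℓ:ℤ)-1)) by ring, abs_neg]
        exact abs_of_nonneg (by omega)]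
    simp only [Int.cast_zero, abs_zero, neg_zero]
    push_cast
    ring
  · intro hodd
    have hle : Even ℓ := by
      rcases hpar with h | h
      · exact h
      · exact absurd hodd (Nat.not_odd_iff_even.2 h)
    have hs0 : sval n₀ = 2 - (ℓ:ℤ) := by
      rcases hclass with rfl | ⟨hl3, rfl⟩ | ⟨hm3, rfl⟩ | rfl
      · exfalso
        obtain ⟨c, hc⟩ := hn₀even (-(m:ℤ))
          (List.mem_cons_of_mem _ List.mem_cons_self)
        obtain ⟨a, ha⟩ := hodd
        omega
      · exfalso
        obtain ⟨c, hc⟩ := hn₀even ((ℓ:ℤ)-1) List.mem_cons_self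
        obtain ⟨a, ha⟩ := hle
        omega
      · exact CS.sval_LC hm hl2
      · exact absurd (CS.even_of_negL hn₀even) (CS.not_even_X2 m (ℓ-2))
    simp only [totalSeminorm, hs0]
    rw [CS.sum_eval ℓ m hm hml (2 - (ℓ:ℤ))]
    rw [show |2*((2:ℤ) - (2 - (ℓ:ℤ)))| = 2*(ℓ:ℤ) by
        rw [show 2*((2:ℤ) - (2 - (ℓ:ℤ))) = 2*(ℓ:ℤ) by ring]
        exact abs_of_nonneg (by omega),
      show |2*(2-(m:ℤ)-(2 - (ℓ:ℤ)))| = 2*((ℓ:ℤ)-(m:ℤ)) by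
        rw [show 2*(2-(m:ℤ)-(2 - (ℓ:ℤ))) = 2*((ℓ:ℤ)-(m:ℤ)) by ring]
        exact abs_of_nonneg (by omega),
      show |2*(2-(ℓ:ℤ)-(2 - (ℓ:ℤ)))| = 0 by
        rw [show 2*(2-(ℓ:ℤ)-(2 - (ℓ:ℤ))) = (0:ℤ) by ring]
        exact abs_zero,
      show |2*(3-(ℓ:ℤ)-(m:ℤ)-(2 - (ℓ:ℤ)))| = 2*((m:ℤ)-1) by
        rw [show 2*(3-(ℓ:ℤ)-(m:ℤ)-(2 - (ℓ:ℤ))) = -(2*((m:ℤ)-1)) by ring, abs_neg]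
        exact abs_of_nonneg (by omega)]
    simp only [Int.cast_zero, abs_zero, neg_zero]
    push_cast
    ring
end
end
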